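/- arXiv:1601.02817 — 10 statements merged into one kernel-verified Lean document; each statement's English description precedes it below -/
import Mathlib

section
/- For every T > 0 the system (A,B) is controllable in time T if and only if the Kalman rank condition holds: the N×(NM) block matrix [B, AB, A²B, …, A^{N−1}B] has rank N. -/
open Matrix MeasureTheory

attribute [local instance] Matrix.linftyOpNormedAddCommGroup Matrix.linftyOpNormedRing
  Matrix.linftyOpNormedAlgebra

namespace KalmanAux

open NormedSpace

variable {N : ℕ}

/-- The continuous linear functional `M ↦ c ⬝ᵥ (M *ᵥ w)` on square matrices. -/
noncomputable def ell (c w : Fin N → ℝ) : Matrix (Fin N) (Fin N) ℝ →L[ℝ] ℝ :=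
  LinearMap.toContinuousLinearMap
    { toFun := fun M => c ⬝ᵥ (M *ᵥ w)
      map_add' := by intro M₁ M₂; simp [Matrix.add_mulVec, dotProduct_add]
      map_smul' := by intro r M; simp [Matrix.smul_mulVec, dotProduct_smul] }

@[simp] lemma ell_apply (c w : Fin N → ℝ) (M : Matrix (Fin N) (Fin N) ℝ) :
    ell c w M = c ⬝ᵥ (M *ᵥ w) := rfl

/-- The continuous linear functional `v ↦ c ⬝ᵥ v`. -/
noncomputable def dotCLM (c : Fin N → ℝ) : (Fin N → ℝ) →L[ℝ] ℝ :=
  LinearMap.toContinuousLinearMap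
    { toFun := fun v => c ⬝ᵥ v
      map_add' := by intro v w; simp [dotProduct_add]
      map_smul' := by intro r v; simp [dotProduct_smul] }

@[simp] lemma dotCLM_apply (c v : Fin N → ℝ) : dotCLM c v = c ⬝ᵥ v := rfl

lemma continuous_expA (A : Matrix (Fin N) (Fin N) ℝ) :
    Continuous fun s : ℝ => exp (s • A) :=
  exp_continuous.comp (continuous_id.smul continuous_const)

lemma hasDerivAt_phi (A : Matrix (Fin N) (Fin N) ℝ) (c w : Fin N → ℝ) (s : ℝ) :
    HasDerivAt (fun s : ℝ => c ⬝ᵥ (exp (s • A) *ᵥ w))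
      (c ⬝ᵥ (exp (s • A) *ᵥ (A *ᵥ w))) s := by
  have h1 := hasDerivAt_exp_smul_const (𝕂 := ℝ) A s
  have h2 := (ell c w).hasFDerivAt.comp_hasDerivAt s h1
  simp only [Function.comp_def, ell_apply, Matrix.mulVec_mulVec] at h2
  have h3 : HasDerivAt (fun s : ℝ => c ⬝ᵥ (exp (s • A) *ᵥ w)) (c ⬝ᵥ ((exp (s • A) * A) *ᵥ w)) s := h2
  rw [Matrix.mulVec_mulVec]
  exact h3

lemma sum_mulVec {ι : Type*} (s : Finset ι) (f : ι → Matrix (Fin N) (Fin N) ℝ)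
    (w : Fin N → ℝ) : (∑ i ∈ s, f i) *ᵥ w = ∑ i ∈ s, f i *ᵥ w := by
  ext j
  simp only [Matrix.mulVec, dotProduct, Finset.sum_apply, Matrix.sum_apply,
    Finset.sum_mul]
  exact Finset.sum_comm

lemma pow_dot_zero {A : Matrix (Fin N) (Fin N) ℝ} {c w : Fin N → ℝ} {T : ℝ} (hT : 0 < T)
    (h : ∀ s ∈ Set.Icc (0:ℝ) T, c ⬝ᵥ (exp (s • A) *ᵥ w) = 0) (k : ℕ) :
    c ⬝ᵥ (A ^ k *ᵥ w) = 0 := by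
  suffices H : ∀ k : ℕ, ∀ s ∈ Set.Icc (0:ℝ) T, c ⬝ᵥ (exp (s • A) *ᵥ (A ^ k *ᵥ w)) = 0 by
    have h0 := H k 0 (Set.left_mem_Icc.2 hT.le)
    simpa [exp_zero] using h0
  intro k
  induction k with
  | zero => intro s hs; simpa using h s hs
  | succ k ih =>
    have hIoo : ∀ s ∈ Set.Ioo (0:ℝ) T, c ⬝ᵥ (exp (s • A) *ᵥ (A ^ (k+1) *ᵥ w)) = 0 := by
      intro s hs
      have hd := hasDerivAt_phi A c (A ^ k *ᵥ w) s
      have hev : (fun s : ℝ => c ⬝ᵥ (exp (s • A) *ᵥ (A ^ k *ᵥ w))) =ᶠ[nhds s]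
          fun _ => (0:ℝ) := by
        filter_upwards [Ioo_mem_nhds hs.1 hs.2] with t ht
        exact ih t (Set.Ioo_subset_Icc_self ht)
      have hd0 : HasDerivAt (fun _ : ℝ => (0:ℝ))
          (c ⬝ᵥ (exp (s • A) *ᵥ (A *ᵥ (A ^ k *ᵥ w)))) s :=
        hd.congr_of_eventuallyEq hev.symm
      have huniq := hd0.unique (hasDerivAt_const s 0)
      have hstep : A *ᵥ (A ^ k *ᵥ w) = A ^ (k+1) *ᵥ w := by
        rw [Matrix.mulVec_mulVec, ← pow_succ']
      rw [hstep] at huniq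
      exact huniq
    intro s hs
    have hcont : Continuous fun s : ℝ => c ⬝ᵥ (exp (s • A) *ᵥ (A ^ (k+1) *ᵥ w)) :=
      (dotCLM c).continuous.comp ((continuous_expA A).matrix_mulVec continuous_const)
    have hcl := Set.EqOn.closure (fun t ht => hIoo t ht) hcont continuous_const
    rw [closure_Ioo hT.ne] at hcl
    exact hcl hs

lemma pow_dot_zero_of_lt {A : Matrix (Fin N) (Fin N) ℝ} {c w : Fin N → ℝ}
    (h : ∀ j : ℕ, j < N → c ⬝ᵥ (A ^ j *ᵥ w) = 0) (k : ℕ) : c ⬝ᵥ (A ^ k *ᵥ w) = 0 := by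
  rcases Nat.eq_zero_or_pos N with hN | hN
  · have : IsEmpty (Fin N) := by rw [hN]; infer_instance
    simp [dotProduct]
  have hdeg : A.charpoly.natDegree = N := by
    simpa using A.charpoly_natDegree_eq_dim
  have h0 := A.aeval_self_charpoly
  rw [Polynomial.aeval_eq_sum_range, hdeg, Finset.sum_range_succ] at h0
  have hcoef : A.charpoly.coeff N = 1 := by
    have hm := A.charpoly_monic.coeff_natDegree
    rwa [hdeg] at hm
  rw [hcoef, one_smul] at h0
  have hAN : A ^ N = -∑ i ∈ Finset.range N, A.charpoly.coeff i • A ^ i :=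
    eq_neg_of_add_eq_zero_right (by linear_combination (norm := abel) h0)
  induction k using Nat.strong_induction_on with
  | _ k ih =>
    rcases lt_or_ge k N with hk | hk
    · exact h k hk
    · have hksub : k - N + N = k := Nat.sub_add_cancel hk
      have hsplit : (A : Matrix (Fin N) (Fin N) ℝ) ^ k = A ^ (k - N) * A ^ N := by
        rw [← pow_add, hksub]
      have hvN : A ^ N *ᵥ w = -∑ i ∈ Finset.range N, A.charpoly.coeff i • (A ^ i *ᵥ w) := by
        rw [hAN, Matrix.neg_mulVec, sum_mulVec]
        congr 1
        exact Finset.sum_congr rfl fun i _ => Matrix.smul_mulVec _ _ _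
      have expand : A ^ (k - N) *ᵥ (A ^ N *ᵥ w)
          = -∑ i ∈ Finset.range N, A.charpoly.coeff i • (A ^ (k - N + i) *ᵥ w) := by
        rw [hvN]
        simp only [← Matrix.mulVecLin_apply, map_neg, map_sum, _root_.map_smul]
        simp only [Matrix.mulVecLin_apply, Matrix.mulVec_mulVec, ← pow_add]
      rw [hsplit, ← Matrix.mulVec_mulVec, expand]
      simp only [← dotCLM_apply, map_neg, map_sum, _root_.map_smul]
      simp only [dotCLM_apply, neg_eq_zero]
      refine Finset.sum_eq_zero fun i hi => ?_
      have hi' := Finset.mem_range.mp hi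
      rw [ih (k - N + i) (by omega), smul_zero]

lemma dot_exp_zero {A : Matrix (Fin N) (Fin N) ℝ} {c w : Fin N → ℝ}
    (h : ∀ k : ℕ, c ⬝ᵥ (A ^ k *ᵥ w) = 0) (s : ℝ) : c ⬝ᵥ (exp (s • A) *ᵥ w) = 0 := by
  have hsum := expSeries_summable' (𝕂 := ℝ) (𝔸 := Matrix (Fin N) (Fin N) ℝ) (s • A)
  have hexp : exp (s • A) = ∑' n : ℕ, ((n.factorial : ℝ))⁻¹ • (s • A) ^ n :=
    congrFun (exp_eq_tsum ℝ) (s • A)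
  calc c ⬝ᵥ (exp (s • A) *ᵥ w)
      = ell c w (∑' n : ℕ, ((n.factorial : ℝ))⁻¹ • (s • A) ^ n) := by rw [ell_apply, hexp]
    _ = ∑' n : ℕ, ell c w (((n.factorial : ℝ))⁻¹ • (s • A) ^ n) :=
        (ell c w).map_tsum hsum 
    _ = 0 := by
        rw [← tsum_zero]
        congr 1
        funext n
        rw [_root_.map_smul, ell_apply, smul_pow, Matrix.smul_mulVec,
          dotProduct_smul, h n]
        simp

lemma rank_iff_ker {n : Type*} [Fintype n] (K : Matrix (Fin N) n ℝ) :
    K.rank = N ↔ ∀ c : Fin N → ℝ, c ᵥ* K = 0 → c = 0 := by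
  have h1 : Kᵀ.rank = K.rank := rank_transpose K
  have h2 := LinearMap.finrank_range_add_finrank_ker Kᵀ.mulVecLin
  have h3 : Module.finrank ℝ (Fin N → ℝ) = N := by simp
  rw [h3] at h2
  have hrankT : Kᵀ.rank = Module.finrank ℝ (LinearMap.range Kᵀ.mulVecLin) := rfl
  constructor
  · intro hr c hc
    have hker : LinearMap.ker Kᵀ.mulVecLin = ⊥ := by
      rw [← Submodule.finrank_eq_zero (S := LinearMap.ker Kᵀ.mulVecLin)]
      omega
    have hmem : c ∈ LinearMap.ker Kᵀ.mulVecLin := by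
      rw [LinearMap.mem_ker, Matrix.mulVecLin_apply, Matrix.mulVec_transpose]
      exact hc
    rw [hker, Submodule.mem_bot] at hmem
    exact hmem
  · intro hc
    have hker : LinearMap.ker Kᵀ.mulVecLin = ⊥ := by
      ext c
      simp only [LinearMap.mem_ker, Matrix.mulVecLin_apply, Matrix.mulVec_transpose,
        Submodule.mem_bot]
      exact ⟨fun hz => hc c hz, fun hz => by rw [hz]; simp⟩
    rw [hker] at h2
    simp only [finrank_bot ℝ _] at h2
    omega

end KalmanAux

open KalmanAux NormedSpace in
/-- **Kalman rank condition.** For every `T > 0`, the linear system `x' = A x + B u`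
is controllable in time `T` (every initial state can be driven to every final state by an
`L²` control, via the variation of constants formula) if and only if the block matrix
`[B, AB, A²B, …, A^{N−1}B]` has rank `N`. -/
theorem controllable_iff_kalman_rank
    {N M : ℕ} (A : Matrix (Fin N) (Fin N) ℝ) (B : Matrix (Fin N) (Fin M) ℝ)
    (T : ℝ) (hT : 0 < T) :
    (∀ x0 x1 : Fin N → ℝ, ∃ u : ℝ → Fin M → ℝ,
        MemLp u 2 (volume.restrict (Set.Ioc 0 T)) ∧
        x1 = (NormedSpace.exp (T • A)).mulVec x0 +
          ∫ t in (0:ℝ)..T, (NormedSpace.exp ((T - t) • A)).mulVec (B.mulVec (u t))) ↔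
      (Matrix.of fun (i : Fin N) (p : Fin N × Fin M) =>
        ((A ^ (p.1 : ℕ)) * B) i p.2).rank = N := by
  classical
  set K : Matrix (Fin N) (Fin N × Fin M) ℝ :=
    Matrix.of (fun (i : Fin N) (p : Fin N × Fin M) => ((A ^ (p.1 : ℕ)) * B) i p.2) with hK
  have hKvec : ∀ (c : Fin N → ℝ) (p : Fin N × Fin M),
      (c ᵥ* K) p = c ⬝ᵥ (A ^ (p.1 : ℕ) *ᵥ fun i => B i p.2) := by
    intro c p
    simp [hK, Matrix.vecMul, Matrix.mulVec, dotProduct, Matrix.mul_apply,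
      Finset.mul_sum]
  rw [rank_iff_ker]
  constructor
  · -- controllable → kernel of `ᵥ* K` trivial
    intro hcon c hc
    have hlt : ∀ (j2 : Fin M) (j : ℕ), j < N → c ⬝ᵥ (A ^ j *ᵥ fun i => B i j2) = 0 := by
      intro j2 j hj
      have h1 := (hKvec c (⟨j, hj⟩, j2)).symm.trans (congrFun hc _)
      simpa using h1
    have hall : ∀ (j2 : Fin M) (k : ℕ), c ⬝ᵥ (A ^ k *ᵥ fun i => B i j2) = 0 :=
      fun j2 => pow_dot_zero_of_lt (fun j hj => hlt j2 j hj)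
    have hvm : ∀ s : ℝ, c ᵥ* exp (s • A) ᵥ* B = 0 := by
      intro s
      funext j2
      have h1 : (c ᵥ* exp (s • A) ᵥ* B) j2 = (c ᵥ* exp (s • A)) ⬝ᵥ (fun i => B i j2) := rfl
      rw [Pi.zero_apply, h1, ← Matrix.dotProduct_mulVec]
      exact dot_exp_zero (hall j2) s
    obtain ⟨u, hu, hx1⟩ := hcon 0 c
    rw [Matrix.mulVec_zero, zero_add] at hx1
    have hpt : ∀ t : ℝ, c ⬝ᵥ (exp ((T - t) • A) *ᵥ (B *ᵥ u t)) = 0 := by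
      intro t
      rw [Matrix.dotProduct_mulVec, Matrix.dotProduct_mulVec, hvm (T - t)]
      simp
    have hcc : c ⬝ᵥ c = 0 := by
      by_cases hInt : IntervalIntegrable
          (fun t => exp ((T - t) • A) *ᵥ (B *ᵥ u t)) volume 0 T
      · have hswap := (dotCLM c).intervalIntegral_comp_comm hInt
        have h2 : dotCLM c (∫ t in (0:ℝ)..T, exp ((T - t) • A) *ᵥ (B *ᵥ u t)) = 0 := by
          rw [← hswap]
          simp only [dotCLM_apply, hpt]
          simp
        rw [← hx1] at h2
        simpa using h2
      · rw [intervalIntegral.integral_undef hInt] at hx1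
        rw [hx1]; simp
    exact dotProduct_self_eq_zero.mp hcc
  · -- rank condition → controllable
    intro hrk x0 x1
    set E : ℝ → Matrix (Fin N) (Fin N) ℝ := fun t => exp ((T - t) • A) with hE
    have hEc : Continuous E :=
      exp_continuous.comp ((continuous_const.sub continuous_id).smul continuous_const)
    set g : (Fin N → ℝ) → ℝ → (Fin M → ℝ) := fun c t => (c ᵥ* E t) ᵥ* B with hg
    have hgc : ∀ c, Continuous (g c) := fun c =>
      (continuous_const.matrix_vecMul hEc).matrix_vecMul continuous_const
    set F : (Fin N → ℝ) → ℝ → (Fin N → ℝ) := fun c t => E t *ᵥ (B *ᵥ g c t) with hF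
    have hFc : ∀ c, Continuous (F c) := fun c =>
      hEc.matrix_mulVec (continuous_const.matrix_mulVec (hgc c))
    have hFadd : ∀ c c' t, F (c + c') t = F c t + F c' t := by
      intro c c' t
      simp only [hF, hg, Matrix.add_vecMul, Matrix.mulVec_add]
    have hFsmul : ∀ (r : ℝ) c t, F (r • c) t = r • F c t := by
      intro r c t
      simp only [hF, hg, Matrix.smul_vecMul, Matrix.mulVec_smul]
    set L : (Fin N → ℝ) →ₗ[ℝ] (Fin N → ℝ) :=
      { toFun := fun c => ∫ t in (0:ℝ)..T, F c t
        map_add' := by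
          intro c c'
          show (∫ t in (0:ℝ)..T, F (c + c') t)
              = (∫ t in (0:ℝ)..T, F c t) + ∫ t in (0:ℝ)..T, F c' t
          rw [show (fun t => F (c + c') t) = fun t => F c t + F c' t from funext (hFadd c c')]
          exact intervalIntegral.integral_add ((hFc c).intervalIntegrable 0 T)
            ((hFc c').intervalIntegrable 0 T)
        map_smul' := by
          intro r c
          show (∫ t in (0:ℝ)..T, F (r • c) t) = (RingHom.id ℝ) r • ∫ t in (0:ℝ)..T, F c t
          rw [show (fun t => F (r • c) t) = fun t => r • F c t from funext (hFsmul r c)]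
          simp only [RingHom.id_apply]
          exact intervalIntegral.integral_smul r _ } with hL
    have hinj : Function.Injective L := by
      rw [← LinearMap.ker_eq_bot]
      ext c
      simp only [LinearMap.mem_ker, Submodule.mem_bot]
      constructor
      · intro hLc
        have hq0 : ∫ t in (0:ℝ)..T, (g c t ⬝ᵥ g c t) = 0 := by
          have hswap := (dotCLM c).intervalIntegral_comp_comm ((hFc c).intervalIntegrable (μ := volume) 0 T)
          have hpt : ∀ t, dotCLM c (F c t) = g c t ⬝ᵥ g c t := by
            intro t
            rw [dotCLM_apply, hF]
            rw [Matrix.dotProduct_mulVec, Matrix.dotProduct_mulVec]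
          calc ∫ t in (0:ℝ)..T, (g c t ⬝ᵥ g c t)
              = ∫ t in (0:ℝ)..T, dotCLM c (F c t) := by simp_rw [hpt]
            _ = dotCLM c (L c) := hswap
            _ = 0 := by rw [hLc]; simp
        have hqc : Continuous fun t => g c t ⬝ᵥ g c t := (hgc c).dotProduct (hgc c)
        have hqnn : ∀ t, 0 ≤ g c t ⬝ᵥ g c t := fun t =>
          Finset.sum_nonneg fun i _ => mul_self_nonneg _
        have hzero : ∀ t ∈ Set.Ioo (0:ℝ) T, g c t ⬝ᵥ g c t = 0 := by
          intro t ht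
          by_contra hne
          rw [intervalIntegral.integral_of_le hT.le] at hq0
          have hInt : IntegrableOn (fun t => g c t ⬝ᵥ g c t) (Set.Ioc 0 T) volume :=
            hqc.integrableOn_Ioc
          have hiff := setIntegral_pos_iff_support_of_nonneg_ae
            (ae_of_all _ hqnn : 0 ≤ᵐ[volume.restrict (Set.Ioc 0 T)] _) hInt
          have hm0 : volume (Function.support (fun t => g c t ⬝ᵥ g c t) ∩ Set.Ioc 0 T) = 0 := by
            by_contra hm
            have hpos := hiff.mpr (pos_iff_ne_zero.mpr hm)
            rw [hq0] at hpos
            exact lt_irrefl _ hpos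
          have hUopen : IsOpen (Function.support (fun t => g c t ⬝ᵥ g c t) ∩ Set.Ioo 0 T) :=
            hqc.isOpen_support.inter isOpen_Ioo
          have hU0 : volume (Function.support (fun t => g c t ⬝ᵥ g c t) ∩ Set.Ioo 0 T) = 0 :=
            measure_mono_null (Set.inter_subset_inter subset_rfl Set.Ioo_subset_Ioc_self) hm0
          have hUe := (IsOpen.measure_eq_zero_iff volume hUopen).mp hU0
          have hmem : t ∈ Function.support (fun t => g c t ⬝ᵥ g c t) ∩ Set.Ioo 0 T :=
            ⟨Function.mem_support.mpr hne, ht⟩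
          rw [hUe] at hmem
          exact Set.notMem_empty t hmem
        have hgz : ∀ t ∈ Set.Ioo (0:ℝ) T, g c t = 0 := fun t ht =>
          dotProduct_self_eq_zero.mp (hzero t ht)
        have hvm : ∀ s ∈ Set.Icc (0:ℝ) T, (c ᵥ* exp (s • A)) ᵥ* B = 0 := by
          have hIoo : ∀ s ∈ Set.Ioo (0:ℝ) T, (c ᵥ* exp (s • A)) ᵥ* B = 0 := by
            intro s hs
            have hts : T - s ∈ Set.Ioo (0:ℝ) T := ⟨by linarith [hs.2], by linarith [hs.1]⟩
            have hgzv := hgz (T - s) hts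
            rw [hg] at hgzv
            simpa [hE, sub_sub_cancel] using hgzv
          have hcont2 : Continuous fun s : ℝ => (c ᵥ* exp (s • A)) ᵥ* B :=
            (continuous_const.matrix_vecMul (continuous_expA A)).matrix_vecMul continuous_const
          have hcl := Set.EqOn.closure (fun t ht => hIoo t ht) hcont2 continuous_const
          rw [closure_Ioo hT.ne] at hcl
          exact fun s hs => hcl hs
        have hcol : ∀ (j2 : Fin M) (k : ℕ), c ⬝ᵥ (A ^ k *ᵥ fun i => B i j2) = 0 := by
          intro j2 k
          refine pow_dot_zero hT (fun s hs => ?_) k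
          have h1 := congrFun (hvm s hs) j2
          have h2 : ((c ᵥ* exp (s • A)) ᵥ* B) j2
              = (c ᵥ* exp (s • A)) ⬝ᵥ (fun i => B i j2) := rfl
          rw [h2, ← Matrix.dotProduct_mulVec] at h1
          simpa using h1
        have hcK : c ᵥ* K = 0 := by
          funext p
          rw [hKvec c p, Pi.zero_apply]
          exact hcol p.2 p.1
        exact hrk c hcK
      · intro hc0
        rw [hc0, map_zero]
    have hsurj := LinearMap.injective_iff_surjective.mp hinj
    obtain ⟨cs, hcs⟩ := hsurj (x1 - exp (T • A) *ᵥ x0)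
    refine ⟨g cs, ?_, ?_⟩
    · obtain ⟨C, hC⟩ := (isCompact_Icc (a := (0:ℝ)) (b := T)).exists_bound_of_continuousOn
        (hgc cs).continuousOn
      refine MemLp.of_bound (hgc cs).aestronglyMeasurable C ?_
      filter_upwards [ae_restrict_mem measurableSet_Ioc] with t ht
      exact hC t (Set.Ioc_subset_Icc_self ht)
    · rw [show (∫ t in (0:ℝ)..T,
          (NormedSpace.exp ((T - t) • A)).mulVec (B.mulVec (g cs t))) = L cs from rfl, hcs]
      simp
end

section
/- The controllability Gramian Λ is positive definite (equivalently, coercive and hence invertible) if and only if the Kalman rank condition rank [B, AB, …, A^{N−1}B] = N holds. -/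
open Matrix MeasureTheory

private lemma kalman_exp_cont {n : ℕ} (C : Matrix (Fin n) (Fin n) ℝ) :
    Continuous fun s : ℝ => NormedSpace.exp (s • C) := by
  letI : SeminormedRing (Matrix (Fin n) (Fin n) ℝ) := Matrix.linftyOpSemiNormedRing
  letI : NormedRing (Matrix (Fin n) (Fin n) ℝ) := Matrix.linftyOpNormedRing
  letI : NormedAlgebra ℝ (Matrix (Fin n) (Fin n) ℝ) := Matrix.linftyOpNormedAlgebra
  letI : NormedAlgebra ℚ (Matrix (Fin n) (Fin n) ℝ) := Matrix.linftyOpNormedAlgebra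
  exact NormedSpace.exp_continuous.comp (continuous_id.smul continuous_const)

/-- The linear map `X ↦ Bt *ᵥ (D *ᵥ (X *ᵥ x))`. -/
private noncomputable def kalmanLin {N M : ℕ} (Bt : Matrix (Fin M) (Fin N) ℝ)
    (D : Matrix (Fin N) (Fin N) ℝ) (x : Fin N → ℝ) :
    Matrix (Fin N) (Fin N) ℝ →ₗ[ℝ] (Fin M → ℝ) where
  toFun X := Bt *ᵥ (D *ᵥ (X *ᵥ x))
  map_add' X Y := by simp [Matrix.add_mulVec, Matrix.mulVec_add]
  map_smul' c X := by simp [Matrix.smul_mulVec, Matrix.mulVec_smul]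

@[simp] private lemma kalmanLin_apply {N M : ℕ} (Bt : Matrix (Fin M) (Fin N) ℝ)
    (D : Matrix (Fin N) (Fin N) ℝ) (x : Fin N → ℝ) (X : Matrix (Fin N) (Fin N) ℝ) :
    kalmanLin Bt D x X = Bt *ᵥ (D *ᵥ (X *ᵥ x)) := rfl

private lemma kalman_hasDerivAt {N M : ℕ} (C : Matrix (Fin N) (Fin N) ℝ)
    (Bt : Matrix (Fin M) (Fin N) ℝ) (x : Fin N → ℝ) (k : ℕ) (t : ℝ) :
    HasDerivAt (fun s : ℝ => Bt *ᵥ (C ^ k *ᵥ (NormedSpace.exp (s • C) *ᵥ x)))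
      (Bt *ᵥ (C ^ (k + 1) *ᵥ (NormedSpace.exp (t • C) *ᵥ x))) t := by
  letI : SeminormedRing (Matrix (Fin N) (Fin N) ℝ) := Matrix.linftyOpSemiNormedRing
  letI : NormedRing (Matrix (Fin N) (Fin N) ℝ) := Matrix.linftyOpNormedRing
  letI : NormedAlgebra ℝ (Matrix (Fin N) (Fin N) ℝ) := Matrix.linftyOpNormedAlgebra
  have h := hasDerivAt_exp_smul_const' C t
  have h2 := ((kalmanLin Bt (C ^ k) x).toContinuousLinearMap.hasFDerivAt).comp_hasDerivAt t h
  simp only [Function.comp_def, LinearMap.coe_toContinuousLinearMap', kalmanLin_apply] at h2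
  refine h2.congr_deriv (Eq.symm ?_)
  change _ = kalmanLin Bt (C ^ k) x (C * NormedSpace.exp (t • C))
  simp only [kalmanLin_apply, Matrix.mulVec_mulVec]
  rw [pow_succ]
  simp [Matrix.mul_assoc]

private lemma kalman_exp_vanish {N M : ℕ} (C : Matrix (Fin N) (Fin N) ℝ)
    (Bt : Matrix (Fin M) (Fin N) ℝ) (y : Fin N → ℝ)
    (h : ∀ k : ℕ, Bt *ᵥ (C ^ k *ᵥ y) = 0) (s : ℝ) :
    Bt *ᵥ (NormedSpace.exp (s • C) *ᵥ y) = 0 := by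
  have hsum : Summable (fun n : ℕ => ((n.factorial : ℝ))⁻¹ • ((s • C) ^ n)) := by
    letI : SeminormedRing (Matrix (Fin N) (Fin N) ℝ) := Matrix.linftyOpSemiNormedRing
    letI : NormedRing (Matrix (Fin N) (Fin N) ℝ) := Matrix.linftyOpNormedRing
    letI : NormedAlgebra ℝ (Matrix (Fin N) (Fin N) ℝ) := Matrix.linftyOpNormedAlgebra
    exact NormedSpace.expSeries_summable' (𝕂 := ℝ) (s • C)
  have hmap := ((kalmanLin Bt 1 y).toContinuousLinearMap).map_tsum hsum
  have hgoal : Bt *ᵥ (NormedSpace.exp (s • C) *ᵥ y)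
      = (kalmanLin Bt 1 y).toContinuousLinearMap (NormedSpace.exp (s • C)) := by
    simp [Matrix.one_mulVec]
  rw [hgoal, NormedSpace.exp_eq_tsum ℝ, hmap]
  have hterm : ∀ n : ℕ,
      (kalmanLin Bt 1 y).toContinuousLinearMap (((n.factorial : ℝ))⁻¹ • (s • C) ^ n) = 0 := by
    intro n
    rw [smul_pow, _root_.map_smul, _root_.map_smul]
    simp only [LinearMap.coe_toContinuousLinearMap', kalmanLin_apply, Matrix.one_mulVec,
      h n, smul_zero]
  simp [hterm]

private lemma kalman_all_pow {N M : ℕ} (C : Matrix (Fin N) (Fin N) ℝ)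
    (Bt : Matrix (Fin M) (Fin N) ℝ) (y : Fin N → ℝ)
    (h : ∀ k, k < N → Bt *ᵥ (C ^ k *ᵥ y) = 0) : ∀ k, Bt *ᵥ (C ^ k *ᵥ y) = 0 := by
  rcases Nat.eq_zero_or_pos N with hN | hN
  · subst hN
    intro k
    funext m
    simp [Matrix.mulVec, dotProduct]
  have hCH : C ^ N = -∑ i ∈ Finset.range N, C.charpoly.coeff i • C ^ i := by
    have h0 := C.aeval_self_charpoly
    rw [Polynomial.aeval_eq_sum_range, Matrix.charpoly_natDegree_eq_dim, Fintype.card_fin,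
      Finset.sum_range_succ] at h0
    have hm : C.charpoly.coeff N = 1 := by
      have hmon := C.charpoly_monic
      have h1 := hmon.coeff_natDegree
      rwa [Matrix.charpoly_natDegree_eq_dim, Fintype.card_fin] at h1
    rw [hm, one_smul, add_comm] at h0
    exact eq_neg_of_add_eq_zero_left h0
  intro k
  induction k using Nat.strong_induction_on with
  | _ k ih =>
    by_cases hk : k < N
    · exact h k hk
    push_neg at hk
    have hphi : ∀ j : ℕ, Bt *ᵥ (C ^ j *ᵥ y) = kalmanLin Bt 1 y (C ^ j) := by
      intro j; simp [Matrix.one_mulVec]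
    obtain ⟨d, rfl⟩ : ∃ d, k = d + N := ⟨k - N, by omega⟩
    rw [hphi, pow_add, hCH, mul_neg, Matrix.mul_sum, map_neg, map_sum]
    have hterm : ∀ i ∈ Finset.range N,
        kalmanLin Bt 1 y (C ^ d * (C.charpoly.coeff i • C ^ i)) = 0 := by
      intro i hi
      rw [mul_smul_comm, LinearMap.map_smul, ← pow_add, ← hphi,
        ih (d + i) (by simp only [Finset.mem_range] at hi; omega), smul_zero]
    rw [Finset.sum_congr rfl hterm]
    simp

/-- The quadratic form linear functional `X ↦ x ⬝ᵥ (X *ᵥ x)`. -/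
private noncomputable def quadLin {N : ℕ} (x : Fin N → ℝ) :
    Matrix (Fin N) (Fin N) ℝ →ₗ[ℝ] ℝ where
  toFun X := x ⬝ᵥ (X *ᵥ x)
  map_add' X Y := by simp [Matrix.add_mulVec, dotProduct_add]
  map_smul' c X := by simp [Matrix.smul_mulVec, dotProduct_smul]

/-- Transpose as a linear map. -/
private noncomputable def transLin {N : ℕ} :
    Matrix (Fin N) (Fin N) ℝ →ₗ[ℝ] Matrix (Fin N) (Fin N) ℝ where
  toFun X := Xᵀ
  map_add' X Y := by simp
  map_smul' c X := by simp

private lemma kalman_rank_iff {N : ℕ} {m : Type*} [Fintype m] (K : Matrix (Fin N) m ℝ) :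
    K.rank = N ↔ ∀ y : Fin N → ℝ, Kᵀ *ᵥ y = 0 → y = 0 := by
  rw [← Matrix.rank_transpose]
  have hrn := LinearMap.finrank_range_add_finrank_ker (Kᵀ).mulVecLin
  rw [Module.finrank_fin_fun] at hrn
  rw [Matrix.rank]
  constructor
  · intro hr y hy
    have hker : Module.finrank ℝ (LinearMap.ker (Kᵀ).mulVecLin) = 0 := by omega
    have hbot : LinearMap.ker (Kᵀ).mulVecLin = ⊥ := Submodule.finrank_eq_zero.mp hker
    refine LinearMap.ker_eq_bot'.mp hbot y ?_
    rw [Matrix.mulVecLin_apply]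
    exact hy
  · intro hinj
    have hbot : LinearMap.ker (Kᵀ).mulVecLin = ⊥ := by
      refine LinearMap.ker_eq_bot'.mpr fun m hm => hinj m ?_
      rw [Matrix.mulVecLin_apply] at hm
      exact hm
    rw [hbot, finrank_bot] at hrn
    omega

attribute [local instance] Matrix.normedAddCommGroup Matrix.normedSpace

private lemma kalman_integrand_cont {N M : ℕ} (A : Matrix (Fin N) (Fin N) ℝ)
    (B : Matrix (Fin N) (Fin M) ℝ) (T : ℝ) :
    Continuous fun t : ℝ =>
      NormedSpace.exp ((T - t) • A) * B * Bᵀ * NormedSpace.exp ((T - t) • Aᵀ) := by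
  have h1 : Continuous fun t : ℝ => NormedSpace.exp ((T - t) • A) :=
    (kalman_exp_cont A).comp (continuous_const.sub continuous_id)
  have h2 : Continuous fun t : ℝ => NormedSpace.exp ((T - t) • Aᵀ) :=
    (kalman_exp_cont Aᵀ).comp (continuous_const.sub continuous_id)
  exact ((h1.matrix_mul continuous_const).matrix_mul continuous_const).matrix_mul h2

private lemma kalman_ptwise {N M : ℕ} (A : Matrix (Fin N) (Fin N) ℝ)
    (B : Matrix (Fin N) (Fin M) ℝ) (s : ℝ) (x : Fin N → ℝ) :
    x ⬝ᵥ ((NormedSpace.exp (s • A) * B * Bᵀ * NormedSpace.exp (s • Aᵀ)) *ᵥ x)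
      = (Bᵀ *ᵥ (NormedSpace.exp (s • Aᵀ) *ᵥ x)) ⬝ᵥ
          (Bᵀ *ᵥ (NormedSpace.exp (s • Aᵀ) *ᵥ x)) := by
  have hE : NormedSpace.exp (s • Aᵀ) = (NormedSpace.exp (s • A))ᵀ := by
    rw [← Matrix.transpose_smul, Matrix.exp_transpose]
  rw [hE]
  set E := NormedSpace.exp (s • A) with hEdef
  have hP : E * B * Bᵀ * Eᵀ = (E * B) * (E * B)ᵀ := by
    rw [Matrix.transpose_mul, Matrix.mul_assoc]
  rw [hP, ← Matrix.mulVec_mulVec, Matrix.dotProduct_mulVec, ← Matrix.mulVec_transpose,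
    Matrix.transpose_mul, Matrix.mulVec_mulVec]

private lemma kalman_quad {N M : ℕ} (A : Matrix (Fin N) (Fin N) ℝ)
    (B : Matrix (Fin N) (Fin M) ℝ) (T : ℝ) (x : Fin N → ℝ) :
    x ⬝ᵥ ((∫ t in (0:ℝ)..T,
        NormedSpace.exp ((T - t) • A) * B * Bᵀ * NormedSpace.exp ((T - t) • Aᵀ)) *ᵥ x)
      = ∫ t in (0:ℝ)..T,
          (Bᵀ *ᵥ (NormedSpace.exp ((T - t) • Aᵀ) *ᵥ x)) ⬝ᵥ
            (Bᵀ *ᵥ (NormedSpace.exp ((T - t) • Aᵀ) *ᵥ x)) := by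
  have hInt := (kalman_integrand_cont A B T).intervalIntegrable (μ := MeasureTheory.volume) 0 T
  have hcomm := (quadLin x).toContinuousLinearMap.intervalIntegral_comp_comm hInt
  have hL : ∀ X : Matrix (Fin N) (Fin N) ℝ,
      (quadLin x).toContinuousLinearMap X = x ⬝ᵥ (X *ᵥ x) := fun X => rfl
  calc x ⬝ᵥ ((∫ t in (0:ℝ)..T,
        NormedSpace.exp ((T - t) • A) * B * Bᵀ * NormedSpace.exp ((T - t) • Aᵀ)) *ᵥ x)
      = ∫ t in (0:ℝ)..T, (quadLin x).toContinuousLinearMap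
          (NormedSpace.exp ((T - t) • A) * B * Bᵀ * NormedSpace.exp ((T - t) • Aᵀ)) := by
        exact (hcomm.trans (hL _)).symm
    _ = _ := by
        refine intervalIntegral.integral_congr fun t _ => ?_
        rw [hL, kalman_ptwise]

private lemma kalman_herm {N M : ℕ} (A : Matrix (Fin N) (Fin N) ℝ)
    (B : Matrix (Fin N) (Fin M) ℝ) (T : ℝ) :
    (∫ t in (0:ℝ)..T,
        NormedSpace.exp ((T - t) • A) * B * Bᵀ * NormedSpace.exp ((T - t) • Aᵀ))ᵀ
      = ∫ t in (0:ℝ)..T,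
        NormedSpace.exp ((T - t) • A) * B * Bᵀ * NormedSpace.exp ((T - t) • Aᵀ) := by
  have hInt := (kalman_integrand_cont A B T).intervalIntegrable (μ := MeasureTheory.volume) 0 T
  have hcomm := (transLin (N := N)).toContinuousLinearMap.intervalIntegral_comp_comm hInt
  have hL : ∀ X : Matrix (Fin N) (Fin N) ℝ,
      (transLin (N := N)).toContinuousLinearMap X = Xᵀ := fun X => rfl
  calc (∫ t in (0:ℝ)..T,
        NormedSpace.exp ((T - t) • A) * B * Bᵀ * NormedSpace.exp ((T - t) • Aᵀ))ᵀ
      = ∫ t in (0:ℝ)..T, (transLin (N := N)).toContinuousLinearMap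
          (NormedSpace.exp ((T - t) • A) * B * Bᵀ * NormedSpace.exp ((T - t) • Aᵀ)) := by
        exact (hcomm.trans (hL _)).symm
    _ = _ := by
        refine intervalIntegral.integral_congr fun t _ => ?_
        rw [hL]
        have hE : NormedSpace.exp ((T - t) • Aᵀ) = (NormedSpace.exp ((T - t) • A))ᵀ := by
          rw [← Matrix.transpose_smul, Matrix.exp_transpose]
        rw [hE]
        simp [Matrix.transpose_mul, Matrix.mul_assoc]

/-- The controllability Gramian `Λ = ∫₀^T e^{(T−t)A} B Bᵀ e^{(T−t)Aᵀ} dt` is positive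
definite (hence coercive and invertible) if and only if the Kalman rank condition
`rank [B, AB, …, A^{N−1}B] = N` holds. -/
theorem gramian_posDef_iff_kalman_rank
    {N M : ℕ} (A : Matrix (Fin N) (Fin N) ℝ) (B : Matrix (Fin N) (Fin M) ℝ)
    (T : ℝ) (hT : 0 < T)
    (Λ : Matrix (Fin N) (Fin N) ℝ)
    (hΛ : Λ = ∫ t in (0:ℝ)..T,
      NormedSpace.exp ((T - t) • A) * B * Bᵀ * NormedSpace.exp ((T - t) • Aᵀ)) :
    Λ.PosDef ↔
      (Matrix.of fun (i : Fin N) (p : Fin N × Fin M) =>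
        ((A ^ (p.1 : ℕ)) * B) i p.2).rank = N := by
  set K : Matrix (Fin N) (Fin N × Fin M) ℝ :=
    Matrix.of fun (i : Fin N) (p : Fin N × Fin M) => ((A ^ (p.1 : ℕ)) * B) i p.2 with hK
  have hKT : ∀ (y : Fin N → ℝ) (p : Fin N × Fin M),
      (Kᵀ *ᵥ y) p = (Bᵀ *ᵥ ((Aᵀ) ^ (p.1 : ℕ) *ᵥ y)) p.2 := by
    intro y p
    simp only [Matrix.mulVec, dotProduct, Matrix.transpose_apply, hK, Matrix.of_apply,
      Matrix.mul_apply, ← Matrix.transpose_pow, Finset.sum_mul, Finset.mul_sum]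
    rw [Finset.sum_comm]
    exact Finset.sum_congr rfl fun j _ => Finset.sum_congr rfl fun i _ => by ring
  constructor
  · -- PosDef → rank
    intro hpd
    refine (kalman_rank_iff K).mpr fun y hy => ?_
    by_contra hy0
    have hlt : ∀ k, k < N → Bᵀ *ᵥ ((Aᵀ) ^ k *ᵥ y) = 0 := by
      intro k hk
      funext m
      have hcf := congrFun hy (⟨k, hk⟩, m)
      rw [hKT y (⟨k, hk⟩, m)] at hcf
      simpa using hcf
    have hall := kalman_all_pow Aᵀ Bᵀ y hlt
    have hzero : ∀ t : ℝ, Bᵀ *ᵥ (NormedSpace.exp ((T - t) • Aᵀ) *ᵥ y) = 0 :=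
      fun t => kalman_exp_vanish Aᵀ Bᵀ y hall (T - t)
    have hq := (Matrix.posDef_iff_dotProduct_mulVec.mp hpd).2 hy0
    rw [star_trivial, hΛ, kalman_quad] at hq
    simp only [hzero, zero_dotProduct, intervalIntegral.integral_zero] at hq
    exact lt_irrefl 0 hq
  · -- rank → PosDef
    intro hrank
    have hinj := (kalman_rank_iff K).mp hrank
    refine Matrix.posDef_iff_dotProduct_mulVec.mpr ⟨?_, ?_⟩
    · show Λᴴ = Λ
      have htr : Λᴴ = Λᵀ := by
        ext i j
        simp [Matrix.conjTranspose_apply]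
      rw [htr, hΛ, kalman_herm]
    · intro x hx
      rw [star_trivial, hΛ, kalman_quad]
      set q : ℝ → ℝ := fun t =>
        (Bᵀ *ᵥ (NormedSpace.exp ((T - t) • Aᵀ) *ᵥ x)) ⬝ᵥ
          (Bᵀ *ᵥ (NormedSpace.exp ((T - t) • Aᵀ) *ᵥ x)) with hqdef
      have hgc : Continuous fun t : ℝ => Bᵀ *ᵥ (NormedSpace.exp ((T - t) • Aᵀ) *ᵥ x) := by
        have h2 : Continuous fun t : ℝ => NormedSpace.exp ((T - t) • Aᵀ) :=
          (kalman_exp_cont Aᵀ).comp (continuous_const.sub continuous_id)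
        exact continuous_const.matrix_mulVec (h2.matrix_mulVec continuous_const)
      have hqc : Continuous q := hgc.dotProduct hgc
      have hqnn : ∀ t, 0 ≤ q t := fun t => Finset.sum_nonneg fun i _ => mul_self_nonneg _
      by_contra hle
      push_neg at hle
      have h0 : (∫ t in (0:ℝ)..T, q t) = 0 :=
        le_antisymm hle (intervalIntegral.integral_nonneg hT.le fun u _ => hqnn u)
      have hae : q =ᵐ[volume.restrict (Set.Ioc 0 T)] 0 :=
        (intervalIntegral.integral_eq_zero_iff_of_le_of_nonneg_ae hT.le
          (Filter.Eventually.of_forall fun t => hqnn t) (hqc.intervalIntegrable 0 T)).mp h0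
      have heq : Set.EqOn q 0 (Set.Ioc 0 T) :=
        Measure.eqOn_Ioc_of_ae_eq volume hae hqc.continuousOn continuous_const.continuousOn
      have hF0 : ∀ s ∈ Set.Ioo (0:ℝ) T,
          Bᵀ *ᵥ ((Aᵀ) ^ 0 *ᵥ (NormedSpace.exp (s • Aᵀ) *ᵥ x)) = 0 := by
        intro s hs
        have ht : T - s ∈ Set.Ioc (0:ℝ) T := ⟨by linarith [hs.2], by linarith [hs.1]⟩
        have hq0 := heq ht
        rw [hqdef] at hq0
        simp only [Pi.zero_apply] at hq0
        have hTs : T - (T - s) = s := by ring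
        rw [hTs, dotProduct_self_eq_zero] at hq0
        rw [pow_zero, Matrix.one_mulVec]
        exact hq0
      have hFk : ∀ k, ∀ s ∈ Set.Ioo (0:ℝ) T,
          Bᵀ *ᵥ ((Aᵀ) ^ k *ᵥ (NormedSpace.exp (s • Aᵀ) *ᵥ x)) = 0 := by
        intro k
        induction k with
        | zero => exact hF0
        | succ k ih =>
          intro s hs
          have hd := kalman_hasDerivAt Aᵀ Bᵀ x k s
          have hev : (fun u : ℝ => Bᵀ *ᵥ ((Aᵀ) ^ k *ᵥ (NormedSpace.exp (u • Aᵀ) *ᵥ x)))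
              =ᶠ[nhds s] fun _ => (0 : Fin M → ℝ) :=
            Filter.eventuallyEq_of_mem (isOpen_Ioo.mem_nhds hs) fun u hu => ih u hu
          have hc : HasDerivAt
              (fun u : ℝ => Bᵀ *ᵥ ((Aᵀ) ^ k *ᵥ (NormedSpace.exp (u • Aᵀ) *ᵥ x)))
              0 s := (hasDerivAt_const s (0 : Fin M → ℝ)).congr_of_eventuallyEq hev
          exact hd.unique hc
      have hmid : (T / 2) ∈ Set.Ioo (0:ℝ) T := ⟨by linarith, by linarith⟩
      have hyK : Kᵀ *ᵥ (NormedSpace.exp ((T / 2) • Aᵀ) *ᵥ x) = 0 := by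
        funext p
        rw [hKT]
        exact congrFun (hFk (p.1 : ℕ) (T / 2) hmid) p.2
      have hy0 : NormedSpace.exp ((T / 2) • Aᵀ) *ᵥ x = 0 := hinj _ hyK
      have hxy : NormedSpace.exp ((-(T / 2)) • Aᵀ) *ᵥ
          (NormedSpace.exp ((T / 2) • Aᵀ) *ᵥ x) = x := by
        rw [Matrix.mulVec_mulVec, ← Matrix.exp_add_of_commute _ _
          (((Commute.refl Aᵀ).smul_left (-(T / 2))).smul_right (T / 2)), ← add_smul]
        norm_num [NormedSpace.exp_zero, Matrix.one_mulVec]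
      rw [hy0, Matrix.mulVec_zero] at hxy
      exact hx hxy.symm
end

section
/- For any φ⁰ ∈ ℝ^N, the control u(t) = Bᵀ e^{(T−t)Aᵀ} φ⁰ drives the initial state x⁰ to the final state x(T) = e^{TA} x⁰ + Λ φ⁰. Consequently, if φ⁰ solves the linear system Λ φ⁰ = x¹ − e^{TA} x⁰, then this control steers the system exactly to the target: x(T) = x¹. -/
open Matrix MeasureTheory

section auxexp
variable {N : ℕ}
attribute [local instance] Matrix.linftyOpNormedRing Matrix.linftyOpNormedAlgebra

lemma cont_exp_aux (A : Matrix (Fin N) (Fin N) ℝ) (T : ℝ) :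
    Continuous fun t : ℝ => NormedSpace.exp ((T - t) • A) :=
  NormedSpace.exp_continuous.comp (by continuity)
end auxexp

attribute [local instance] Matrix.normedAddCommGroup Matrix.normedSpace

/-- `M ↦ M.mulVec v` as a continuous linear map. -/
noncomputable def mulVecCLM {N : ℕ} (v : Fin N → ℝ) :
    Matrix (Fin N) (Fin N) ℝ →L[ℝ] (Fin N → ℝ) :=
  LinearMap.toContinuousLinearMap
    { toFun := fun M => M.mulVec v
      map_add' := fun M₁ M₂ => Matrix.add_mulVec M₁ M₂ v
      map_smul' := fun c M => by ext i; simp [Matrix.smul_mulVec] }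

lemma integral_mulVec_comm {N M : ℕ} (A : Matrix (Fin N) (Fin N) ℝ)
    (B : Matrix (Fin N) (Fin M) ℝ) (T : ℝ) (φ0 : Fin N → ℝ) :
    (∫ t in (0:ℝ)..T, (NormedSpace.exp ((T - t) • A)).mulVec
          (B.mulVec (Bᵀ.mulVec ((NormedSpace.exp ((T - t) • Aᵀ)).mulVec φ0)))) =
    (∫ t in (0:ℝ)..T,
      NormedSpace.exp ((T - t) • A) * B * Bᵀ * NormedSpace.exp ((T - t) • Aᵀ)).mulVec φ0 := by
  have hc : Continuous fun t : ℝ =>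
      NormedSpace.exp ((T - t) • A) * B * Bᵀ * NormedSpace.exp ((T - t) • Aᵀ) :=
    (((cont_exp_aux A T).matrix_mul continuous_const).matrix_mul continuous_const).matrix_mul
      (cont_exp_aux Aᵀ T)
  have hint : IntervalIntegrable _ MeasureTheory.volume 0 T := hc.intervalIntegrable 0 T
  have h := (mulVecCLM φ0).intervalIntegral_comp_comm hint
  simp only [mulVecCLM, LinearMap.coe_toContinuousLinearMap', LinearMap.coe_mk,
    AddHom.coe_mk] at h
  refine Eq.trans ?_ h
  congr 1
  ext t
  simp [Matrix.mulVec_mulVec, Matrix.mul_assoc]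
  rfl

/-- For any `φ⁰`, the control `u(t) = Bᵀ e^{(T−t)Aᵀ} φ⁰` drives the initial state `x⁰` to
`x(T) = e^{TA} x⁰ + Λ φ⁰`; consequently, if `Λ φ⁰ = x¹ − e^{TA} x⁰`, this control steers the
system exactly to `x¹`. -/
theorem control_from_gramian_minimiser
    {N M : ℕ} (A : Matrix (Fin N) (Fin N) ℝ) (B : Matrix (Fin N) (Fin M) ℝ)
    (T : ℝ) (hT : 0 < T)
    (Λ : Matrix (Fin N) (Fin N) ℝ)
    (hΛ : Λ = ∫ t in (0:ℝ)..T,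
      NormedSpace.exp ((T - t) • A) * B * Bᵀ * NormedSpace.exp ((T - t) • Aᵀ))
    (x0 x1 φ0 : Fin N → ℝ) :
    (NormedSpace.exp (T • A)).mulVec x0 +
        (∫ t in (0:ℝ)..T, (NormedSpace.exp ((T - t) • A)).mulVec
          (B.mulVec (Bᵀ.mulVec ((NormedSpace.exp ((T - t) • Aᵀ)).mulVec φ0)))) =
      (NormedSpace.exp (T • A)).mulVec x0 + Λ.mulVec φ0 ∧
    (Λ.mulVec φ0 = x1 - (NormedSpace.exp (T • A)).mulVec x0 →
      (NormedSpace.exp (T • A)).mulVec x0 +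
        (∫ t in (0:ℝ)..T, (NormedSpace.exp ((T - t) • A)).mulVec
          (B.mulVec (Bᵀ.mulVec ((NormedSpace.exp ((T - t) • Aᵀ)).mulVec φ0)))) = x1) := by
  have key : (∫ t in (0:ℝ)..T, (NormedSpace.exp ((T - t) • A)).mulVec
          (B.mulVec (Bᵀ.mulVec ((NormedSpace.exp ((T - t) • Aᵀ)).mulVec φ0)))) =
      Λ.mulVec φ0 := by
    rw [hΛ]; exact integral_mulVec_comm A B T φ0
  refine ⟨by rw [key], fun h => ?_⟩
  rw [key, h]
  abel
end

section
/- Assume the Gramian Λ is positive definite. Then the quadratic functional J(φ⁰) = ½ ∫₀^T |Bᵀ e^{(T−t)Aᵀ} φ⁰|² dt − ⟨x¹, φ⁰⟩ + ⟨x⁰, e^{TAᵀ} φ⁰⟩ equals ½⟨Λφ⁰, φ⁰⟩ − ⟨x¹ − e^{TA}x⁰, φ⁰⟩, it admits a unique global minimizer φ̃⁰ over ℝ^N, and this minimizer is characterized by the Euler–Lagrange equation Λ φ̃⁰ = x¹ − e^{TA} x⁰. -/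
open Matrix MeasureTheory

section linfty
attribute [local instance] Matrix.linftyOpNormedRing Matrix.linftyOpNormedAlgebra
private theorem aux_exp_cont (N : ℕ) (A : Matrix (Fin N) (Fin N) ℝ) (T : ℝ) :
    Continuous (fun t : ℝ => NormedSpace.exp ((T - t) • A)) :=
  NormedSpace.exp_continuous.comp (by continuity)
end linfty

private theorem aux_sqform {N Mn : ℕ} (Mtx : Matrix (Fin N) (Fin Mn) ℝ) (φ : Fin N → ℝ) :
    (Mtxᵀ.mulVec φ) ⬝ᵥ (Mtxᵀ.mulVec φ) = (Mtx * Mtxᵀ).mulVec φ ⬝ᵥ φ := by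
  rw [Matrix.mulVec_transpose, dotProduct_comm ((Mtx * Mtxᵀ) *ᵥ φ),
    Matrix.dotProduct_mulVec φ, ← Matrix.vecMul_vecMul,
    ← Matrix.dotProduct_mulVec (φ ᵥ* Mtx), Matrix.mulVec_transpose]

attribute [local instance] Matrix.normedAddCommGroup Matrix.normedSpace

/-- The quadratic form `M ↦ ⟨Mφ, φ⟩` as a continuous linear map in `M`. -/
private noncomputable def auxQF {N : ℕ} (φ : Fin N → ℝ) :
    Matrix (Fin N) (Fin N) ℝ →L[ℝ] ℝ :=
  LinearMap.toContinuousLinearMap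
    { toFun := fun Mtx => Mtx.mulVec φ ⬝ᵥ φ
      map_add' := by intro x y; simp [Matrix.add_mulVec, add_dotProduct]
      map_smul' := by intro c x; simp [Matrix.smul_mulVec, smul_dotProduct] }

/-- If the Gramian `Λ` is positive definite, the quadratic functional
`J(φ⁰) = ½ ∫₀^T |Bᵀ e^{(T−t)Aᵀ} φ⁰|² dt − ⟨x¹, φ⁰⟩ + ⟨x⁰, e^{TAᵀ} φ⁰⟩` equals
`½⟨Λφ⁰, φ⁰⟩ − ⟨x¹ − e^{TA}x⁰, φ⁰⟩`, it has a unique global minimiser, and a point is a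
global minimiser iff it satisfies the Euler–Lagrange equation `Λ φ̃⁰ = x¹ − e^{TA} x⁰`. -/
theorem functional_J_unique_minimiser
    {N M : ℕ} (A : Matrix (Fin N) (Fin N) ℝ) (B : Matrix (Fin N) (Fin M) ℝ)
    (T : ℝ) (hT : 0 < T)
    (Λ : Matrix (Fin N) (Fin N) ℝ)
    (hΛ : Λ = ∫ t in (0:ℝ)..T,
      NormedSpace.exp ((T - t) • A) * B * Bᵀ * NormedSpace.exp ((T - t) • Aᵀ))
    (hpos : Λ.PosDef)
    (x0 x1 : Fin N → ℝ)
    (J : (Fin N → ℝ) → ℝ)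
    (hJ : ∀ φ0 : Fin N → ℝ,
      J φ0 = (1 / 2) * (∫ t in (0:ℝ)..T,
          (Bᵀ.mulVec ((NormedSpace.exp ((T - t) • Aᵀ)).mulVec φ0)) ⬝ᵥ
            (Bᵀ.mulVec ((NormedSpace.exp ((T - t) • Aᵀ)).mulVec φ0)))
        - x1 ⬝ᵥ φ0 + x0 ⬝ᵥ ((NormedSpace.exp (T • Aᵀ)).mulVec φ0)) :
    (∀ φ0 : Fin N → ℝ,
      J φ0 = (1 / 2) * (Λ.mulVec φ0 ⬝ᵥ φ0)
        - (x1 - (NormedSpace.exp (T • A)).mulVec x0) ⬝ᵥ φ0) ∧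
    (∃! φt : Fin N → ℝ, ∀ ψ : Fin N → ℝ, J φt ≤ J ψ) ∧
    (∀ φt : Fin N → ℝ, (∀ ψ : Fin N → ℝ, J φt ≤ J ψ) ↔
      Λ.mulVec φt = x1 - (NormedSpace.exp (T • A)).mulVec x0) := by
  -- notation
  set b : Fin N → ℝ := x1 - (NormedSpace.exp (T • A)).mulVec x0 with hb
  -- transpose of exponential
  have hexpT : ∀ c : ℝ, NormedSpace.exp (c • Aᵀ) = (NormedSpace.exp (c • A))ᵀ := by
    intro c
    rw [← Matrix.transpose_smul, Matrix.exp_transpose]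
  -- Part 1 : the formula for J
  have part1 : ∀ φ0 : Fin N → ℝ,
      J φ0 = (1 / 2) * (Λ.mulVec φ0 ⬝ᵥ φ0) - b ⬝ᵥ φ0 := by
    intro φ0
    have hint := Continuous.intervalIntegrable (μ := MeasureTheory.volume)
        (u := fun t => NormedSpace.exp ((T - t) • A) * B * Bᵀ * NormedSpace.exp ((T - t) • Aᵀ))
        (by
      exact (((aux_exp_cont N A T).matrix_mul continuous_const).matrix_mul
        continuous_const).matrix_mul (aux_exp_cont N Aᵀ T)) 0 T
    have hswap : Λ.mulVec φ0 ⬝ᵥ φ0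
        = ∫ t in (0:ℝ)..T,
          (NormedSpace.exp ((T - t) • A) * B * Bᵀ * NormedSpace.exp ((T - t) • Aᵀ)).mulVec φ0
            ⬝ᵥ φ0 := by
      have := (auxQF φ0).intervalIntegral_comp_comm hint
      rw [hΛ]
      exact (this).symm
    have hpt : ∀ t : ℝ,
        (Bᵀ.mulVec ((NormedSpace.exp ((T - t) • Aᵀ)).mulVec φ0)) ⬝ᵥ
            (Bᵀ.mulVec ((NormedSpace.exp ((T - t) • Aᵀ)).mulVec φ0))
        = (NormedSpace.exp ((T - t) • A) * B * Bᵀ * NormedSpace.exp ((T - t) • Aᵀ)).mulVec φ0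
            ⬝ᵥ φ0 := by
      intro t
      rw [hexpT]
      have := aux_sqform (NormedSpace.exp ((T - t) • A) * B) φ0
      simpa [Matrix.mulVec_mulVec, Matrix.transpose_mul, Matrix.mul_assoc] using this
    have hlast : x0 ⬝ᵥ ((NormedSpace.exp (T • Aᵀ)).mulVec φ0)
        = ((NormedSpace.exp (T • A)).mulVec x0) ⬝ᵥ φ0 := by
      rw [hexpT, Matrix.dotProduct_mulVec, Matrix.vecMul_transpose]
    rw [hJ φ0, hswap, hb, sub_dotProduct, hlast]
    have : (∫ t in (0:ℝ)..T,
        (Bᵀ.mulVec ((NormedSpace.exp ((T - t) • Aᵀ)).mulVec φ0)) ⬝ᵥ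
          (Bᵀ.mulVec ((NormedSpace.exp ((T - t) • Aᵀ)).mulVec φ0)))
      = ∫ t in (0:ℝ)..T,
        (NormedSpace.exp ((T - t) • A) * B * Bᵀ * NormedSpace.exp ((T - t) • Aᵀ)).mulVec φ0
          ⬝ᵥ φ0 := by
      exact intervalIntegral.integral_congr (fun t _ => hpt t)
    rw [this]
    ring
  -- symmetry of Λ
  have hsymm : ∀ u v : Fin N → ℝ, Λ.mulVec u ⬝ᵥ v = Λ.mulVec v ⬝ᵥ u := by
    intro u v
    have hΛt : Λᵀ = Λ := by
      have := hpos.1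
      rwa [Matrix.IsHermitian, Matrix.conjTranspose_eq_transpose_of_trivial] at this
    rw [dotProduct_comm (Λ *ᵥ u) v, Matrix.dotProduct_mulVec, ← Matrix.mulVec_transpose,
      hΛt]
  -- the candidate minimiser
  have hdet : IsUnit Λ.det := isUnit_iff_ne_zero.mpr (ne_of_gt hpos.det_pos)
  set φs : Fin N → ℝ := Λ⁻¹.mulVec b with hφs
  have hsol : Λ.mulVec φs = b := by
    rw [hφs, Matrix.mulVec_mulVec, Matrix.mul_nonsing_inv _ hdet, Matrix.one_mulVec]
  -- expansion around a solution of the Euler-Lagrange equation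
  have expand : ∀ φ ψ : Fin N → ℝ, Λ.mulVec φ = b →
      J ψ = J φ + (1 / 2) * (Λ.mulVec (ψ - φ) ⬝ᵥ (ψ - φ)) := by
    intro φ ψ hφ
    rw [part1 ψ, part1 φ, ← hφ, Matrix.mulVec_sub]
    simp only [sub_dotProduct, dotProduct_sub]
    rw [hsymm ψ φ]
    ring
  -- positivity
  have hnonneg : ∀ h : Fin N → ℝ, 0 ≤ Λ.mulVec h ⬝ᵥ h := by
    intro h
    have := hpos.posSemidef.dotProduct_mulVec_nonneg h
    simpa [dotProduct_comm] using this
  have hposd : ∀ h : Fin N → ℝ, h ≠ 0 → 0 < Λ.mulVec h ⬝ᵥ h := by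
    intro h hne
    have := hpos.dotProduct_mulVec_pos hne
    simpa [dotProduct_comm] using this
  -- any solution of the EL equation is a global minimiser
  have min_of_sol : ∀ φ : Fin N → ℝ, Λ.mulVec φ = b → ∀ ψ, J φ ≤ J ψ := by
    intro φ hφ ψ
    rw [expand φ ψ hφ]
    nlinarith [hnonneg (ψ - φ)]
  -- any global minimiser equals φs
  have eq_of_min : ∀ φ : Fin N → ℝ, (∀ ψ, J φ ≤ J ψ) → φ = φs := by
    intro φ hφ
    by_contra hne
    have hd : φ - φs ≠ 0 := sub_ne_zero.mpr hne
    have h1 : J φ = J φs + (1 / 2) * (Λ.mulVec (φ - φs) ⬝ᵥ (φ - φs)) := expand φs φ hsol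
    have h2 : J φ ≤ J φs := hφ φs
    nlinarith [hposd (φ - φs) hd]
  refine ⟨part1, ⟨φs, min_of_sol φs hsol, fun φ hφ => eq_of_min φ hφ⟩, ?_⟩
  intro φ
  constructor
  · intro hφ
    rw [eq_of_min φ hφ]
    exact hsol
  · intro hφ
    exact min_of_sol φ hφ
end

section
/- Assume Λ is positive definite, let φ̃⁰ be the solution of Λ φ̃⁰ = x¹ − e^{TA} x⁰, and set û(t) = Bᵀ e^{(T−t)Aᵀ} φ̃⁰. Then among all controls u ∈ L²((0,T); ℝ^M) satisfying e^{TA} x⁰ + ∫₀^T e^{(T−t)A} B u(t) dt = x¹, the control û has minimal L² norm: ∫₀^T |u(t)|² dt ≥ ∫₀^T |û(t)|² dt, with equality if and only if u = û almost everywhere. -/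
open Matrix MeasureTheory

attribute [local instance] Matrix.normedAddCommGroup Matrix.normedSpace

section aux

variable {N M : ℕ}

section cont
attribute [local instance] Matrix.linftyOpNormedRing Matrix.linftyOpNormedAlgebra
theorem myexpcont (A : Matrix (Fin N) (Fin N) ℝ) (T : ℝ) :
    Continuous (fun t : ℝ => NormedSpace.exp ((T - t) • A)) :=
  haveI : @CompleteSpace (Matrix (Fin N) (Fin N) ℝ)
    (@PseudoMetricSpace.toUniformSpace _ (Matrix.linftyOpNormedRing (n := Fin N) (α := ℝ)).toPseudoMetricSpace) :=
    FiniteDimensional.complete ℝ _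
  (NormedSpace.exp_continuous).comp (by continuity)
end cont

-- components of a MemLp pi-valued function
theorem comp_memLp {α : Type*} [MeasurableSpace α] {μ : Measure α}
    {u : α → Fin M → ℝ} (hu : MemLp u 2 μ) (j : Fin M) :
    MemLp (fun t => u t j) 2 μ :=
  (ContinuousLinearMap.proj (R := ℝ) (φ := fun _ : Fin M => ℝ) j).comp_memLp' hu

theorem integrable_dot {α : Type*} [MeasurableSpace α] {μ : Measure α}
    {f g : α → Fin M → ℝ} (hf : MemLp f 2 μ) (hg : MemLp g 2 μ) :
    Integrable (fun t => f t ⬝ᵥ g t) μ := by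
  simp only [dotProduct]
  apply integrable_finset_sum
  intro j _
  have h1 := comp_memLp hf j
  have h2 := comp_memLp hg j
  have : MemLp (fun t => f t j • g t j) 1 μ :=
    MemLp.smul (p := 2) (q := 2) (r := 1) h2 h1
  simpa [smul_eq_mul] using memLp_one_iff_integrable.mp this

end aux

section aux2
variable {N M : ℕ}

theorem norm_mulVec_le (Mx : Matrix (Fin N) (Fin M) ℝ) (v : Fin M → ℝ) :
    ‖Mx.mulVec v‖ ≤ M * ‖Mx‖ * ‖v‖ := by
  rw [pi_norm_le_iff_of_nonneg (by positivity)]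
  intro i
  calc ‖∑ j, Mx i j * v j‖ ≤ ∑ j, ‖Mx i j * v j‖ := norm_sum_le _ _
    _ ≤ ∑ _j : Fin M, ‖Mx‖ * ‖v‖ := Finset.sum_le_sum fun j _ => by
        rw [norm_mul]
        exact mul_le_mul (Matrix.norm_entry_le_entrywise_sup_norm Mx) (norm_le_pi_norm v j)
          (norm_nonneg _) (norm_nonneg _)
    _ = M * ‖Mx‖ * ‖v‖ := by simp [Finset.sum_const, Finset.card_univ, mul_assoc]

instance {T : ℝ} : IsFiniteMeasure (volume.restrict (Set.Ioc (0:ℝ) T)) :=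
  ⟨by rw [Measure.restrict_apply_univ]; exact measure_Ioc_lt_top⟩

theorem cont_memLp {T : ℝ} {f : ℝ → Fin M → ℝ} (hf : Continuous f) :
    MemLp f 2 (volume.restrict (Set.Ioc 0 T)) := by
  obtain ⟨C, hC⟩ := (isCompact_Icc (a := (0:ℝ)) (b := T)).exists_bound_of_continuousOn
    hf.continuousOn
  refine MemLp.of_bound hf.aestronglyMeasurable (max C 0) ?_
  filter_upwards [ae_restrict_mem measurableSet_Ioc] with t ht
  exact le_trans (hC t (Set.Ioc_subset_Icc_self ht)) (le_max_left _ _)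

theorem continuous_mulVec_pair :
    Continuous (fun p : Matrix (Fin N) (Fin M) ℝ × (Fin M → ℝ) => p.1.mulVec p.2) := by
  apply continuous_pi
  intro i
  simp only [Matrix.mulVec, dotProduct]
  exact continuous_finset_sum _ fun j _ =>
    (((continuous_apply j).comp ((continuous_apply i).comp continuous_fst)).mul
      ((continuous_apply j).comp continuous_snd))

theorem integrable_matvec {T : ℝ} {f : ℝ → Matrix (Fin N) (Fin M) ℝ} (hf : Continuous f)
    {u : ℝ → Fin M → ℝ} (hu : MemLp u 2 (volume.restrict (Set.Ioc 0 T))) :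
    Integrable (fun t => (f t).mulVec (u t)) (volume.restrict (Set.Ioc 0 T)) := by
  obtain ⟨C, hC⟩ := (isCompact_Icc (a := (0:ℝ)) (b := T)).exists_bound_of_continuousOn
    hf.continuousOn
  have huint : Integrable u (volume.restrict (Set.Ioc 0 T)) :=
    memLp_one_iff_integrable.mp (hu.mono_exponent one_le_two)
  haveI : TopologicalSpace.PseudoMetrizableSpace (Matrix (Fin N) (Fin M) ℝ) :=
    inferInstanceAs (TopologicalSpace.PseudoMetrizableSpace (Fin N → Fin M → ℝ))
  have hasm : AEStronglyMeasurable (fun t => (f t).mulVec (u t))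
      (volume.restrict (Set.Ioc 0 T)) :=
    continuous_mulVec_pair.comp_aestronglyMeasurable
      (hf.aestronglyMeasurable.prodMk hu.aestronglyMeasurable)
  refine Integrable.mono' ((huint.norm.const_mul (M * max C 0))) hasm ?_
  filter_upwards [ae_restrict_mem measurableSet_Ioc] with t ht
  calc ‖(f t).mulVec (u t)‖ ≤ M * ‖f t‖ * ‖u t‖ := norm_mulVec_le _ _
    _ ≤ M * max C 0 * ‖u t‖ := by
        have := le_trans (hC t (Set.Ioc_subset_Icc_self ht)) (le_max_left C 0)
        gcongr
end aux2

/-- If `Λ` is positive definite, `φ̃⁰` solves `Λ φ̃⁰ = x¹ − e^{TA} x⁰` and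
`û(t) = Bᵀ e^{(T−t)Aᵀ} φ̃⁰`, then among all `L²` controls steering `x⁰` to `x¹` in time `T`,
the control `û` has minimal `L²` norm, with equality only for controls agreeing with `û`
almost everywhere on `(0,T)`. -/
theorem minimal_norm_control
    {N M : ℕ} (A : Matrix (Fin N) (Fin N) ℝ) (B : Matrix (Fin N) (Fin M) ℝ)
    (T : ℝ) (hT : 0 < T)
    (Λ : Matrix (Fin N) (Fin N) ℝ)
    (hΛ : Λ = ∫ t in (0:ℝ)..T,
      NormedSpace.exp ((T - t) • A) * B * Bᵀ * NormedSpace.exp ((T - t) • Aᵀ))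
    (hpos : Λ.PosDef)
    (x0 x1 φt : Fin N → ℝ)
    (hφt : Λ.mulVec φt = x1 - (NormedSpace.exp (T • A)).mulVec x0)
    (uhat : ℝ → Fin M → ℝ)
    (huhat : ∀ t : ℝ, uhat t = Bᵀ.mulVec ((NormedSpace.exp ((T - t) • Aᵀ)).mulVec φt)) :
    ∀ u : ℝ → Fin M → ℝ,
      MemLp u 2 (volume.restrict (Set.Ioc 0 T)) →
      x1 = (NormedSpace.exp (T • A)).mulVec x0 +
        ∫ t in (0:ℝ)..T, (NormedSpace.exp ((T - t) • A)).mulVec (B.mulVec (u t)) →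
      (∫ t in (0:ℝ)..T, uhat t ⬝ᵥ uhat t) ≤ (∫ t in (0:ℝ)..T, u t ⬝ᵥ u t) ∧
      ((∫ t in (0:ℝ)..T, u t ⬝ᵥ u t) = (∫ t in (0:ℝ)..T, uhat t ⬝ᵥ uhat t) ↔
        ∀ᵐ t ∂(volume.restrict (Set.Ioc 0 T)), u t = uhat t) := by
  intro u hu hcontrol
  set μ : Measure ℝ := volume.restrict (Set.Ioc 0 T) with hμ
  set E : ℝ → Matrix (Fin N) (Fin N) ℝ := fun t => NormedSpace.exp ((T - t) • A) with hE
  -- transposes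
  have hEt : ∀ t, NormedSpace.exp ((T - t) • Aᵀ) = (E t)ᵀ := by
    intro t
    rw [hE, ← Matrix.transpose_smul, Matrix.exp_transpose]
  -- continuity
  have hEcont : Continuous E := myexpcont A T
  have hEtcont : Continuous fun t => NormedSpace.exp ((T - t) • Aᵀ) := myexpcont Aᵀ T
  have huhat_eq : uhat = fun t => Bᵀ.mulVec
      ((NormedSpace.exp ((T - t) • Aᵀ)).mulVec φt) := funext huhat
  have huc : Continuous uhat := by
    rw [huhat_eq]
    exact continuous_mulVec_pair.comp (continuous_const.prodMk
      (continuous_mulVec_pair.comp (hEtcont.prodMk continuous_const)))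
  have huhat2 : MemLp uhat 2 μ := cont_memLp huc
  -- key dot product identity
  have key : ∀ (t : ℝ) (v : Fin M → ℝ),
      uhat t ⬝ᵥ v = φt ⬝ᵥ (E t).mulVec (B.mulVec v) := by
    intro t v
    rw [huhat t, hEt t, Matrix.mulVec_transpose, Matrix.mulVec_transpose,
      Matrix.dotProduct_mulVec, Matrix.dotProduct_mulVec]
  -- the Gramian integrand
  set G : ℝ → Matrix (Fin N) (Fin N) ℝ :=
    fun t => E t * B * Bᵀ * NormedSpace.exp ((T - t) • Aᵀ) with hG
  have hGcont : Continuous G := ((hEcont.matrix_mul continuous_const).matrix_mul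
    continuous_const).matrix_mul hEtcont
  have hGint := hGcont.integrableOn_Ioc (a := 0) (b := T) (μ := volume)
  have hΛ' : Λ = ∫ t, G t ∂μ := by
    rw [hΛ, intervalIntegral.integral_of_le hT.le]
  -- pointwise: uhat ⬝ uhat in terms of G
  have huuG : ∀ t, uhat t ⬝ᵥ uhat t = φt ⬝ᵥ (G t).mulVec φt := by
    intro t
    rw [key t (uhat t), huhat t, hG]
    simp only [Matrix.mulVec_mulVec, Matrix.mul_assoc]
  -- continuous linear functionals
  let Lmat : Matrix (Fin N) (Fin N) ℝ →L[ℝ] ℝ :=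
    LinearMap.toContinuousLinearMap
      { toFun := fun Mx => φt ⬝ᵥ Mx.mulVec φt
        map_add' := fun X Y => by simp [Matrix.add_mulVec, dotProduct_add]
        map_smul' := fun c X => by simp [Matrix.smul_mulVec, dotProduct_smul] }
  let Ldot : (Fin N → ℝ) →L[ℝ] ℝ :=
    LinearMap.toContinuousLinearMap
      { toFun := fun v => φt ⬝ᵥ v
        map_add' := fun X Y => by simp [dotProduct_add]
        map_smul' := fun c X => by simp [dotProduct_smul] }
  -- ∫ uhat ⬝ uhat
  have c1 : ∫ t, uhat t ⬝ᵥ uhat t ∂μ = φt ⬝ᵥ Λ.mulVec φt := by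
    have : ∀ t, uhat t ⬝ᵥ uhat t = Lmat (G t) := huuG
    calc ∫ t, uhat t ⬝ᵥ uhat t ∂μ = ∫ t, Lmat (G t) ∂μ := by simp_rw [this]
      _ = Lmat (∫ t, G t ∂μ) := ContinuousLinearMap.integral_comp_comm Lmat hGint
      _ = φt ⬝ᵥ Λ.mulVec φt := by rw [← hΛ']; rfl
  -- ∫ uhat ⬝ u
  have hgint : Integrable (fun t => (E t).mulVec (B.mulVec (u t))) μ := by
    have := integrable_matvec (f := fun t => E t * B)
      (hEcont.matrix_mul continuous_const) hu
    simpa [Matrix.mulVec_mulVec] using this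
  have c2 : ∫ t, uhat t ⬝ᵥ u t ∂μ = φt ⬝ᵥ Λ.mulVec φt := by
    have hint : (∫ t, (E t).mulVec (B.mulVec (u t)) ∂μ) =
        x1 - (NormedSpace.exp (T • A)).mulVec x0 := by
      rw [intervalIntegral.integral_of_le hT.le] at hcontrol
      rw [eq_sub_iff_add_eq, ← hcontrol.symm]
      abel
    calc ∫ t, uhat t ⬝ᵥ u t ∂μ
        = ∫ t, Ldot ((E t).mulVec (B.mulVec (u t))) ∂μ := by
          simp_rw [key]; rfl
      _ = Ldot (∫ t, (E t).mulVec (B.mulVec (u t)) ∂μ) :=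
          ContinuousLinearMap.integral_comp_comm Ldot hgint
      _ = φt ⬝ᵥ Λ.mulVec φt := by rw [hint, ← hφt]; rfl
  -- integrabilities of dot products
  have Iuu : Integrable (fun t => u t ⬝ᵥ u t) μ := integrable_dot hu hu
  have Ihu : Integrable (fun t => uhat t ⬝ᵥ u t) μ := integrable_dot huhat2 hu
  have Ihh : Integrable (fun t => uhat t ⬝ᵥ uhat t) μ := integrable_dot huhat2 huhat2
  -- expansion of the square
  have expand : ∀ t, (u t - uhat t) ⬝ᵥ (u t - uhat t) =
      u t ⬝ᵥ u t - uhat t ⬝ᵥ u t - uhat t ⬝ᵥ u t + uhat t ⬝ᵥ uhat t := by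
    intro t
    simp only [sub_dotProduct, dotProduct_sub]
    rw [dotProduct_comm (u t) (uhat t)]
    ring
  have hdd : ∫ t, (u t - uhat t) ⬝ᵥ (u t - uhat t) ∂μ =
      (∫ t, u t ⬝ᵥ u t ∂μ) - ∫ t, uhat t ⬝ᵥ uhat t ∂μ := by
    simp_rw [expand]
    have I2 : Integrable (fun t => u t ⬝ᵥ u t - uhat t ⬝ᵥ u t) μ := Iuu.sub Ihu
    have I3 : Integrable (fun t => u t ⬝ᵥ u t - uhat t ⬝ᵥ u t - uhat t ⬝ᵥ u t) μ := I2.sub Ihu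
    rw [integral_add I3 Ihh, integral_sub I2 Ihu, integral_sub Iuu Ihu, c2, c1]
    ring
  have hdd_int : Integrable (fun t => (u t - uhat t) ⬝ᵥ (u t - uhat t)) μ :=
    integrable_dot (hu.sub huhat2) (hu.sub huhat2)
  have hdd_nonneg : ∀ t, 0 ≤ (u t - uhat t) ⬝ᵥ (u t - uhat t) := fun t =>
    Finset.sum_nonneg fun j _ => mul_self_nonneg _
  have hnonneg : 0 ≤ (∫ t, u t ⬝ᵥ u t ∂μ) - ∫ t, uhat t ⬝ᵥ uhat t ∂μ := by
    rw [← hdd]; exact integral_nonneg hdd_nonneg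
  rw [intervalIntegral.integral_of_le hT.le, intervalIntegral.integral_of_le hT.le]
  constructor
  · linarith
  constructor
  · intro heq
    have h0 : ∫ t, (u t - uhat t) ⬝ᵥ (u t - uhat t) ∂μ = 0 := by rw [hdd, heq]; ring
    have := (integral_eq_zero_iff_of_nonneg hdd_nonneg hdd_int).mp h0
    filter_upwards [this] with t ht
    have := dotProduct_self_eq_zero.mp ht
    exact sub_eq_zero.mp this
  · intro hae
    exact integral_congr_ae (hae.mono fun t ht => by simp only [ht])
end

section
/- Assume the Gramian satisfies Λ ≥ λ I for some λ > 0, let φ̃⁰ solve Λ φ̃⁰ = x¹ − e^{TA} x⁰, and set û(t) = Bᵀ e^{(T−t)Aᵀ} φ̃⁰. Then the minimal-norm control satisfies the bound ∫₀^T |û(t)|² dt = ⟨Λ φ̃⁰, φ̃⁰⟩ ≤ λ^{−1} |x¹ − e^{TA} x⁰|²; i.e. the L² norm of the control is bounded, up to the factor λ^{−1/2}, by the norm of the data x¹ − e^{TA} x⁰. -/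
open Matrix MeasureTheory

attribute [local instance] Matrix.normedAddCommGroup Matrix.normedSpace

lemma myExpContinuous (n : ℕ) :
    Continuous (fun X : Matrix (Fin n) (Fin n) ℝ => NormedSpace.exp X) := by
  letI := Matrix.linftyOpNormedRing (n := Fin n) (α := ℝ)
  letI := Matrix.linftyOpNormedAlgebra (n := Fin n) (R := ℝ) (α := ℝ)
  letI := NormedAlgebra.restrictScalars ℚ ℝ (Matrix (Fin n) (Fin n) ℝ)
  exact @NormedSpace.exp_continuous (Matrix (Fin n) (Fin n) ℝ) _ _ (FiniteDimensional.complete ℝ _)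

/-- If the Gramian satisfies `Λ ≥ λ I` with `λ > 0`, `φ̃⁰` solves `Λ φ̃⁰ = x¹ − e^{TA} x⁰`
and `û(t) = Bᵀ e^{(T−t)Aᵀ} φ̃⁰`, then `∫₀^T |û|² dt = ⟨Λ φ̃⁰, φ̃⁰⟩ ≤ λ⁻¹ |x¹ − e^{TA} x⁰|²`. -/
theorem minimal_norm_control_bound
    {N M : ℕ} (A : Matrix (Fin N) (Fin N) ℝ) (B : Matrix (Fin N) (Fin M) ℝ)
    (T : ℝ) (hT : 0 < T)
    (Λ : Matrix (Fin N) (Fin N) ℝ)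
    (hΛ : Λ = ∫ t in (0:ℝ)..T,
      NormedSpace.exp ((T - t) • A) * B * Bᵀ * NormedSpace.exp ((T - t) • Aᵀ))
    (lam : ℝ) (hlam : 0 < lam)
    (hcoer : ∀ φ : Fin N → ℝ, lam * (φ ⬝ᵥ φ) ≤ Λ.mulVec φ ⬝ᵥ φ)
    (x0 x1 φt : Fin N → ℝ)
    (hφt : Λ.mulVec φt = x1 - (NormedSpace.exp (T • A)).mulVec x0)
    (uhat : ℝ → Fin M → ℝ)
    (huhat : ∀ t : ℝ, uhat t = Bᵀ.mulVec ((NormedSpace.exp ((T - t) • Aᵀ)).mulVec φt)) :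
    (∫ t in (0:ℝ)..T, uhat t ⬝ᵥ uhat t) = Λ.mulVec φt ⬝ᵥ φt ∧
    Λ.mulVec φt ⬝ᵥ φt ≤ lam⁻¹ *
      ((x1 - (NormedSpace.exp (T • A)).mulVec x0) ⬝ᵥ
        (x1 - (NormedSpace.exp (T • A)).mulVec x0)) := by
  constructor
  · -- the energy identity
    -- the continuous linear map `X ↦ X *ᵥ φt ⬝ᵥ φt`
    set L : Matrix (Fin N) (Fin N) ℝ →L[ℝ] ℝ :=
      LinearMap.toContinuousLinearMap
        { toFun := fun X => X.mulVec φt ⬝ᵥ φt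
          map_add' := fun X Y => by simp only [Matrix.add_mulVec, add_dotProduct]
          map_smul' := fun c X => by
            simp only [Matrix.smul_mulVec, smul_dotProduct, RingHom.id_apply,
              smul_eq_mul] } with hL
    have hcont : Continuous (fun t : ℝ =>
        NormedSpace.exp ((T - t) • A) * B * Bᵀ * NormedSpace.exp ((T - t) • Aᵀ)) := by
      have h1 : Continuous (fun t : ℝ => NormedSpace.exp ((T - t) • A)) :=
        (myExpContinuous N).comp (((continuous_const.sub continuous_id).smul continuous_const))
      have h2 : Continuous (fun t : ℝ => NormedSpace.exp ((T - t) • Aᵀ)) :=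
        (myExpContinuous N).comp (((continuous_const.sub continuous_id).smul continuous_const))
      exact ((h1.matrix_mul continuous_const).matrix_mul continuous_const).matrix_mul h2
    have hint := hcont.intervalIntegrable (μ := volume) 0 T
    have hcomm := L.intervalIntegral_comp_comm hint
    have hLΛ : L Λ = Λ.mulVec φt ⬝ᵥ φt := rfl
    rw [← hLΛ, hΛ]
    refine Eq.trans ?_ hcomm
    apply intervalIntegral.integral_congr
    intro t _
    show uhat t ⬝ᵥ uhat t = _
    simp only [hL, LinearMap.coe_toContinuousLinearMap', LinearMap.coe_mk, AddHom.coe_mk]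
    rw [huhat t]
    have hτ : (NormedSpace.exp ((T - t) • A))ᵀ = NormedSpace.exp ((T - t) • Aᵀ) := by
      rw [← Matrix.transpose_smul, Matrix.exp_transpose]
    set E := NormedSpace.exp ((T - t) • A)
    set F := NormedSpace.exp ((T - t) • Aᵀ)
    set u := Bᵀ.mulVec (F.mulVec φt)
    calc u ⬝ᵥ u = u ⬝ᵥ Bᵀ.mulVec (Eᵀ.mulVec φt) := by rw [hτ]
      _ = u ⬝ᵥ (Bᵀ * Eᵀ).mulVec φt := by rw [Matrix.mulVec_mulVec]
      _ = u ᵥ* (Bᵀ * Eᵀ) ⬝ᵥ φt := Matrix.dotProduct_mulVec _ _ _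
      _ = (Bᵀ * Eᵀ)ᵀ.mulVec u ⬝ᵥ φt := by rw [← Matrix.mulVec_transpose]
      _ = (E * B * Bᵀ * F).mulVec φt ⬝ᵥ φt := by
          rw [Matrix.transpose_mul, Matrix.transpose_transpose, Matrix.transpose_transpose]
          simp only [u, Matrix.mulVec_mulVec, Matrix.mul_assoc]
  · -- the coercivity bound
    set y := x1 - (NormedSpace.exp (T • A)).mulVec x0 with hy
    have hS : Λ.mulVec φt ⬝ᵥ φt = y ⬝ᵥ φt := by rw [hφt]
    have hCS : (y ⬝ᵥ φt) ^ 2 ≤ (y ⬝ᵥ y) * (φt ⬝ᵥ φt) := by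
      have := Finset.sum_mul_sq_le_sq_mul_sq Finset.univ y φt
      simpa [dotProduct, sq, Finset.mul_sum, Finset.sum_mul, mul_comm, mul_assoc,
        mul_left_comm] using this
    have hφφ : lam * (φt ⬝ᵥ φt) ≤ y ⬝ᵥ φt := by rw [← hS]; exact hcoer φt
    have hynn : 0 ≤ y ⬝ᵥ y := by
      have := Finset.sum_nonneg (fun i (_ : i ∈ Finset.univ) => mul_self_nonneg (y i))
      simpa [dotProduct] using this
    rw [hS]
    rcases le_or_gt (y ⬝ᵥ φt) 0 with h0 | h0
    · exact h0.trans (by positivity)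
    · -- y⬝φt > 0 : from CS, (y⬝φt)^2 ≤ (y⬝y)(φt⬝φt) ≤ (y⬝y) * (y⬝φt)/lam
      have hφnn : φt ⬝ᵥ φt ≤ lam⁻¹ * (y ⬝ᵥ φt) := by
        rw [le_inv_mul_iff₀ hlam]; exact hφφ
      have h2 : (y ⬝ᵥ φt) ^ 2 ≤ (y ⬝ᵥ y) * (lam⁻¹ * (y ⬝ᵥ φt)) :=
        hCS.trans (by gcongr)
      have := (mul_le_mul_iff_left₀ h0).mp (by
        calc (y ⬝ᵥ φt) * (y ⬝ᵥ φt) = (y ⬝ᵥ φt) ^ 2 := (sq _).symm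
          _ ≤ (y ⬝ᵥ y) * (lam⁻¹ * (y ⬝ᵥ φt)) := h2
          _ = (lam⁻¹ * (y ⬝ᵥ y)) * (y ⬝ᵥ φt) := by ring)
      exact this
end

section
/- (First greedy snapshot is weak-greedy optimal.) Suppose max_{ν̃ ∈ 𝒩̃} |b_ν̃| ≥ ε/2, and let ν₁ ∈ 𝒩̃ attain this maximum, i.e. |b_{ν₁}| ≥ |b_ν̃| for all ν̃ ∈ 𝒩̃. Then |φ⁰_{ν₁}| ≥ γ · sup_{ν ∈ 𝒩} |φ⁰_ν|, where γ = Λ₋ / (2 Λ₊). -/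
open Metric

/-- Operator norm bound from quadratic form bounds for a symmetric map. -/
lemma norm_apply_le_of_symm {E : Type*} [NormedAddCommGroup E] [InnerProductSpace ℝ E]
    (A : E →ₗ[ℝ] E) (hA : A.IsSymmetric) (Λp : ℝ)
    (h0 : ∀ ψ : E, 0 ≤ (inner ℝ (A ψ) ψ : ℝ))
    (hp : ∀ ψ : E, (inner ℝ (A ψ) ψ : ℝ) ≤ Λp * ‖ψ‖ ^ 2)
    (ψ : E) : ‖A ψ‖ ≤ Λp * ‖ψ‖ := by
  rcases eq_or_ne ψ 0 with rfl | hψ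
  · simp
  have hψ' : 0 < ‖ψ‖ := norm_pos_iff.mpr hψ
  have hΛp : 0 ≤ Λp := by nlinarith [(h0 ψ).trans (hp ψ), pow_pos hψ' 2]
  rcases eq_or_ne (A ψ) 0 with h | h
  · rw [h, norm_zero]; positivity
  have hb : 0 < ‖A ψ‖ := norm_pos_iff.mpr h
  set x : E := (‖ψ‖ / ‖A ψ‖) • (A ψ) with hx
  have hxnorm : ‖x‖ = ‖ψ‖ := by
    rw [hx, norm_smul, Real.norm_eq_abs, abs_div, abs_of_nonneg (norm_nonneg ψ),
      abs_of_nonneg (norm_nonneg (A ψ)), div_mul_cancel₀]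
    exact hb.ne'
  have hs1 : (inner ℝ (A x) ψ : ℝ) = (inner ℝ (A ψ) x : ℝ) := by
    rw [hA x ψ, real_inner_comm]
  have hpol : 4 * (inner ℝ (A ψ) x : ℝ)
      = (inner ℝ (A (ψ + x)) (ψ + x) : ℝ) - (inner ℝ (A (ψ - x)) (ψ - x) : ℝ) := by
    simp only [map_add, map_sub, inner_add_left, inner_add_right, inner_sub_left,
      inner_sub_right]
    linarith
  have hbound : 4 * (inner ℝ (A ψ) x : ℝ) ≤ Λp * (2 * ‖ψ‖) ^ 2 := by
    rw [hpol]
    have h1 : (inner ℝ (A (ψ + x)) (ψ + x) : ℝ) ≤ Λp * ‖ψ + x‖ ^ 2 := hp _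
    have h2 : 0 ≤ (inner ℝ (A (ψ - x)) (ψ - x) : ℝ) := h0 _
    have h3 : ‖ψ + x‖ ≤ 2 * ‖ψ‖ := by
      calc ‖ψ + x‖ ≤ ‖ψ‖ + ‖x‖ := norm_add_le _ _
      _ = 2 * ‖ψ‖ := by rw [hxnorm]; ring
    have h4 : Λp * ‖ψ + x‖ ^ 2 ≤ Λp * (2 * ‖ψ‖) ^ 2 := by
      apply mul_le_mul_of_nonneg_left _ hΛp
      exact pow_le_pow_left₀ (norm_nonneg _) h3 2
    linarith
  have hinner : (inner ℝ (A ψ) x : ℝ) = ‖ψ‖ * ‖A ψ‖ := by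
    rw [hx, real_inner_smul_right, real_inner_self_eq_norm_sq]
    field_simp
  rw [hinner] at hbound
  nlinarith

/-- **First greedy snapshot is weak-greedy optimal.** If `ν₁ ∈ 𝒩̃` maximises `|b_μ|` over
the `δ`-net `𝒩̃` and this maximum is at least `ε/2`, then
`|φ⁰_{ν₁}| ≥ γ · sup_{ν ∈ 𝒩} |φ⁰_ν|` with `γ = Λ₋/(2Λ₊)`. -/
theorem greedy_first_snapshot
    {d N : ℕ}
    (𝒩 : Set (EuclideanSpace ℝ (Fin d))) (h𝒩 : IsCompact 𝒩)
    (Λm Λp : ℝ) (hΛm : 0 < Λm) (hmp : Λm ≤ Λp)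
    (Λ : EuclideanSpace ℝ (Fin d) → Matrix (Fin N) (Fin N) ℝ)
    (hsym : ∀ ν ∈ 𝒩, (Λ ν).IsSymm)
    (hlow : ∀ ν ∈ 𝒩, ∀ ψ : EuclideanSpace ℝ (Fin N),
      Λm * ‖ψ‖ ^ 2 ≤ (inner ℝ (Matrix.toEuclideanLin (Λ ν) ψ) ψ : ℝ))
    (hupp : ∀ ν ∈ 𝒩, ∀ ψ : EuclideanSpace ℝ (Fin N),
      (inner ℝ (Matrix.toEuclideanLin (Λ ν) ψ) ψ : ℝ) ≤ Λp * ‖ψ‖ ^ 2)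
    (b φ : EuclideanSpace ℝ (Fin d) → EuclideanSpace ℝ (Fin N))
    (hφ : ∀ ν ∈ 𝒩, Matrix.toEuclideanLin (Λ ν) (φ ν) = b ν)
    (Cφ : ℝ) (hCφ : 0 < Cφ)
    (hLip : ∀ ν ∈ 𝒩, ∀ μ ∈ 𝒩, ‖φ ν - φ μ‖ ≤ Cφ * ‖ν - μ‖)
    (ε δ : ℝ) (hε : 0 < ε) (hδ0 : 0 < δ) (hδ : δ ≤ ε / (2 * Cφ * Λm))
    (Nnet : Finset (EuclideanSpace ℝ (Fin d))) (hNnet : ↑Nnet ⊆ 𝒩)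
    (hnet : ∀ ν ∈ 𝒩, ∃ μ ∈ Nnet, ‖ν - μ‖ < δ)
    (ν₁ : EuclideanSpace ℝ (Fin d)) (hν₁ : ν₁ ∈ Nnet)
    (hmax : ∀ μ ∈ Nnet, ‖b μ‖ ≤ ‖b ν₁‖)
    (hbig : ε / 2 ≤ ‖b ν₁‖) :
    (Λm / (2 * Λp)) * (⨆ ν : 𝒩, ‖φ (ν : EuclideanSpace ℝ (Fin d))‖) ≤ ‖φ ν₁‖ := by
  have hΛp : 0 < Λp := hΛm.trans_le hmp
  have hν₁N : ν₁ ∈ 𝒩 := hNnet hν₁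
  -- key bound 1 : Λm * ‖φ μ‖ ≤ ‖b μ‖ for μ ∈ 𝒩
  have key1 : ∀ μ ∈ 𝒩, Λm * ‖φ μ‖ ≤ ‖b μ‖ := by
    intro μ hμ
    rcases eq_or_ne (φ μ) 0 with h | h
    · simp [h]
    · have hp : 0 < ‖φ μ‖ := norm_pos_iff.mpr h
      have h1 : Λm * ‖φ μ‖ ^ 2 ≤ (inner ℝ (Matrix.toEuclideanLin (Λ μ) (φ μ)) (φ μ) : ℝ) :=
        hlow μ hμ (φ μ)
      rw [hφ μ hμ] at h1
      have h2 : (inner ℝ (b μ) (φ μ) : ℝ) ≤ ‖b μ‖ * ‖φ μ‖ := real_inner_le_norm _ _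
      have := h1.trans h2
      exact (mul_le_mul_iff_of_pos_right hp).mp (by nlinarith : Λm * ‖φ μ‖ * ‖φ μ‖ ≤ ‖b μ‖ * ‖φ μ‖)
  -- key bound 2 : ‖b ν₁‖ ≤ Λp * ‖φ ν₁‖
  have key2 : ‖b ν₁‖ ≤ Λp * ‖φ ν₁‖ := by
    have hherm : (Λ ν₁).IsHermitian := by
      have hs := hsym ν₁ hν₁N
      rw [Matrix.IsSymm] at hs
      rw [Matrix.IsHermitian]
      ext i j
      rw [Matrix.conjTranspose_apply]
      simpa using congrFun (congrFun hs i) j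
    have hsymm : (Matrix.toEuclideanLin (Λ ν₁)).IsSymmetric :=
      Matrix.isHermitian_iff_isSymmetric.mp hherm
    have := norm_apply_le_of_symm (Matrix.toEuclideanLin (Λ ν₁)) hsymm Λp
      (fun ψ => le_trans (by positivity) (hlow ν₁ hν₁N ψ)) (hupp ν₁ hν₁N) (φ ν₁)
    rwa [hφ ν₁ hν₁N] at this
  -- main pointwise bound
  have main : ∀ ν : 𝒩, ‖φ (ν : EuclideanSpace ℝ (Fin d))‖ ≤ (2 * Λp / Λm) * ‖φ ν₁‖ := by
    rintro ⟨ν, hν⟩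
    obtain ⟨μ, hμnet, hdist⟩ := hnet ν hν
    have hμN : μ ∈ 𝒩 := hNnet hμnet
    have h1 : ‖φ ν‖ ≤ ‖φ μ‖ + Cφ * ‖ν - μ‖ := by
      have := hLip ν hν μ hμN
      have htri : ‖φ ν‖ ≤ ‖φ μ‖ + ‖φ ν - φ μ‖ := by
        have := norm_add_le (φ μ) (φ ν - φ μ)
        simpa using this
      linarith
    have h2 : Cφ * ‖ν - μ‖ ≤ ε / (2 * Λm) := by
      calc Cφ * ‖ν - μ‖ ≤ Cφ * δ := mul_le_mul_of_nonneg_left hdist.le hCφ.le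
        _ ≤ Cφ * (ε / (2 * Cφ * Λm)) := mul_le_mul_of_nonneg_left hδ hCφ.le
        _ = ε / (2 * Λm) := by field_simp
    have h3 : ‖φ μ‖ ≤ ‖b μ‖ / Λm := by
      rw [le_div_iff₀ hΛm]
      have := key1 μ hμN
      linarith
    have h4 : ‖b μ‖ ≤ ‖b ν₁‖ := hmax μ hμnet
    have h5 : ε / (2 * Λm) ≤ ‖b ν₁‖ / Λm := by
      rw [div_le_div_iff₀ (by positivity) hΛm]
      nlinarith
    have hd1 : ‖b μ‖ / Λm ≤ ‖b ν₁‖ / Λm := by gcongr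
    calc ‖φ ν‖ ≤ ‖φ μ‖ + Cφ * ‖ν - μ‖ := h1
      _ ≤ ‖b μ‖ / Λm + ε / (2 * Λm) := by linarith
      _ ≤ ‖b ν₁‖ / Λm + ‖b ν₁‖ / Λm := by linarith
      _ = 2 * ‖b ν₁‖ / Λm := by ring
      _ ≤ 2 * (Λp * ‖φ ν₁‖) / Λm := by gcongr
      _ = (2 * Λp / Λm) * ‖φ ν₁‖ := by ring
  have hsup : (⨆ ν : 𝒩, ‖φ (ν : EuclideanSpace ℝ (Fin d))‖) ≤ (2 * Λp / Λm) * ‖φ ν₁‖ :=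
    Real.iSup_le main (by positivity)
  calc (Λm / (2 * Λp)) * (⨆ ν : 𝒩, ‖φ (ν : EuclideanSpace ℝ (Fin d))‖)
      ≤ (Λm / (2 * Λp)) * ((2 * Λp / Λm) * ‖φ ν₁‖) :=
        mul_le_mul_of_nonneg_left hsup (by positivity)
    _ = ‖φ ν₁‖ := by field_simp
end

section
/- (General greedy step is weak-greedy optimal.) Let Φ_j ⊂ ℝ^N be a linear subspace. Suppose max_{ν̃ ∈ 𝒩̃} dist(b_ν̃, Λ_ν̃ Φ_j) ≥ ε/2, and let ν_{j+1} ∈ 𝒩̃ attain this maximum. Then dist(φ⁰_{ν_{j+1}}, Φ_j) ≥ γ · sup_{ν ∈ 𝒩} dist(φ⁰_ν, Φ_j), where γ = Λ₋ / (2 Λ₊). -/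
open Metric

private lemma le_infDist_aux {E : Type*} [NormedAddCommGroup E] {s : Set E} {x : E} {a : ℝ}
    (hs : s.Nonempty) (h : ∀ y ∈ s, a ≤ dist x y) : a ≤ infDist x s := by
  haveI : Nonempty s := hs.to_subtype
  rw [infDist_eq_iInf]
  exact le_ciInf fun y => h y y.2

private lemma cs_aux {E : Type*} [NormedAddCommGroup E] [InnerProductSpace ℝ E]
    (T : E →ₗ[ℝ] E) (hsym : ∀ u v : E, (inner ℝ (T u) v : ℝ) = inner ℝ u (T v))
    (hpos : ∀ w : E, 0 ≤ (inner ℝ (T w) w : ℝ)) (u v : E) :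
    (inner ℝ (T u) v : ℝ) ^ 2 ≤ (inner ℝ (T u) u : ℝ) * (inner ℝ (T v) v : ℝ) := by
  have h : ∀ x : ℝ, 0 ≤ (inner ℝ (T v) v : ℝ) * (x * x) + (2 * (inner ℝ (T u) v : ℝ)) * x
      + (inner ℝ (T u) u : ℝ) := by
    intro x
    have h0 := hpos (u + x • v)
    have hexp : (inner ℝ (T (u + x • v)) (u + x • v) : ℝ) =
        (inner ℝ (T v) v : ℝ) * (x * x) + (2 * (inner ℝ (T u) v : ℝ)) * x
          + (inner ℝ (T u) u : ℝ) := by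
      have hc : (inner ℝ (T v) u : ℝ) = (inner ℝ (T u) v : ℝ) := by
        rw [hsym v u, real_inner_comm]
      simp only [map_add, map_smul, inner_add_left, inner_add_right,
        real_inner_smul_left, real_inner_smul_right, hc]
      ring
    linarith [hexp ▸ h0]
  have hd := discrim_le_zero h
  rw [discrim] at hd
  nlinarith [hd]

/-- **General greedy step is weak-greedy optimal.** If `ν_{j+1} ∈ 𝒩̃` maximises the
surrogate `dist(b_ν̃, Λ_ν̃ Φ_j)` over the `δ`-net `𝒩̃` and this maximum is at least `ε/2`,
then `dist(φ⁰_{ν_{j+1}}, Φ_j) ≥ γ · sup_{ν ∈ 𝒩} dist(φ⁰_ν, Φ_j)` with `γ = Λ₋/(2Λ₊)`. -/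
theorem greedy_general_step
    {d N : ℕ}
    (𝒩 : Set (EuclideanSpace ℝ (Fin d))) (h𝒩 : IsCompact 𝒩)
    (Λm Λp : ℝ) (hΛm : 0 < Λm) (hmp : Λm ≤ Λp)
    (Λ : EuclideanSpace ℝ (Fin d) → Matrix (Fin N) (Fin N) ℝ)
    (hsym : ∀ ν ∈ 𝒩, (Λ ν).IsSymm)
    (hlow : ∀ ν ∈ 𝒩, ∀ ψ : EuclideanSpace ℝ (Fin N),
      Λm * ‖ψ‖ ^ 2 ≤ (inner ℝ (Matrix.toEuclideanLin (Λ ν) ψ) ψ : ℝ))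
    (hupp : ∀ ν ∈ 𝒩, ∀ ψ : EuclideanSpace ℝ (Fin N),
      (inner ℝ (Matrix.toEuclideanLin (Λ ν) ψ) ψ : ℝ) ≤ Λp * ‖ψ‖ ^ 2)
    (b φ : EuclideanSpace ℝ (Fin d) → EuclideanSpace ℝ (Fin N))
    (hφ : ∀ ν ∈ 𝒩, Matrix.toEuclideanLin (Λ ν) (φ ν) = b ν)
    (Cφ : ℝ) (hCφ : 0 < Cφ)
    (hLip : ∀ ν ∈ 𝒩, ∀ μ ∈ 𝒩, ‖φ ν - φ μ‖ ≤ Cφ * ‖ν - μ‖)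
    (ε δ : ℝ) (hε : 0 < ε) (hδ0 : 0 < δ) (hδ : δ ≤ ε / (2 * Cφ * Λm))
    (Nnet : Finset (EuclideanSpace ℝ (Fin d))) (hNnet : ↑Nnet ⊆ 𝒩)
    (hnet : ∀ ν ∈ 𝒩, ∃ μ ∈ Nnet, ‖ν - μ‖ < δ)
    (Φj : Submodule ℝ (EuclideanSpace ℝ (Fin N)))
    (νj : EuclideanSpace ℝ (Fin d)) (hνj : νj ∈ Nnet)
    (hmax : ∀ μ ∈ Nnet,
      infDist (b μ) (Φj.map (Matrix.toEuclideanLin (Λ μ)) : Set (EuclideanSpace ℝ (Fin N))) ≤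
        infDist (b νj) (Φj.map (Matrix.toEuclideanLin (Λ νj)) : Set (EuclideanSpace ℝ (Fin N))))
    (hbig : ε / 2 ≤
      infDist (b νj) (Φj.map (Matrix.toEuclideanLin (Λ νj)) : Set (EuclideanSpace ℝ (Fin N)))) :
    (Λm / (2 * Λp)) *
        (⨆ ν : 𝒩, infDist (φ (ν : EuclideanSpace ℝ (Fin d)))
          (Φj : Set (EuclideanSpace ℝ (Fin N)))) ≤
      infDist (φ νj) (Φj : Set (EuclideanSpace ℝ (Fin N))) := by
  have hΛp : 0 < Λp := hΛm.trans_le hmp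
  set T : EuclideanSpace ℝ (Fin d) →
      (EuclideanSpace ℝ (Fin N) →ₗ[ℝ] EuclideanSpace ℝ (Fin N)) :=
    fun ν => Matrix.toEuclideanLin (Λ ν) with hT
  -- symmetry of the operators
  have hTsym : ∀ ν ∈ 𝒩, ∀ u v : EuclideanSpace ℝ (Fin N),
      (inner ℝ (T ν u) v : ℝ) = inner ℝ u (T ν v) := by
    intro ν hν
    have hherm : (Λ ν).IsHermitian := by
      rw [Matrix.IsHermitian]
      ext i j
      have h := congrFun (congrFun (hsym ν hν) i) j
      simpa [Matrix.conjTranspose_apply, Matrix.transpose_apply] using h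
    exact Matrix.isHermitian_iff_isSymmetric.1 hherm
  -- lower norm bound
  have hlowN : ∀ ν ∈ 𝒩, ∀ ψ : EuclideanSpace ℝ (Fin N), Λm * ‖ψ‖ ≤ ‖T ν ψ‖ := by
    intro ν hν ψ
    have h1 := hlow ν hν ψ
    have h2 : (inner ℝ (T ν ψ) ψ : ℝ) ≤ ‖T ν ψ‖ * ‖ψ‖ := real_inner_le_norm _ _
    rcases eq_or_ne ψ 0 with rfl | hψ
    · simp
    · have hn : 0 < ‖ψ‖ := norm_pos_iff.2 hψ
      nlinarith
  -- upper norm bound via Cauchy–Schwarz for the positive form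
  have huppN : ∀ ν ∈ 𝒩, ∀ ψ : EuclideanSpace ℝ (Fin N), ‖T ν ψ‖ ≤ Λp * ‖ψ‖ := by
    intro ν hν ψ
    have hpos : ∀ w : EuclideanSpace ℝ (Fin N), 0 ≤ (inner ℝ (T ν w) w : ℝ) :=
      fun w => le_trans (by positivity) (hlow ν hν w)
    have hcs := cs_aux (T ν) (hTsym ν hν) hpos ψ (T ν ψ)
    have h1 : (inner ℝ (T ν ψ) (T ν ψ) : ℝ) = ‖T ν ψ‖ ^ 2 := real_inner_self_eq_norm_sq _
    have h2 := hupp ν hν ψ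
    have h3 := hupp ν hν (T ν ψ)
    have hpψ := hpos ψ
    have hpTψ := hpos (T ν ψ)
    rw [h1] at hcs
    by_contra hcon
    push_neg at hcon
    have hn : 0 ≤ Λp * ‖ψ‖ := by positivity
    have hTn : 0 < ‖T ν ψ‖ := lt_of_le_of_lt hn hcon
    have h23 : (inner ℝ (T ν ψ) ψ : ℝ) * (inner ℝ (T ν (T ν ψ)) (T ν ψ) : ℝ) ≤
        (Λp * ‖ψ‖ ^ 2) * (Λp * ‖T ν ψ‖ ^ 2) :=
      mul_le_mul h2 h3 hpTψ (by positivity)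
    have hlt : (Λp * ‖ψ‖) * (Λp * ‖ψ‖) < ‖T ν ψ‖ * ‖T ν ψ‖ := mul_self_lt_mul_self hn hcon
    nlinarith [mul_pos hTn hTn, hcs, h23, hlt]
  have h0Φ : (Φj : Set (EuclideanSpace ℝ (Fin N))).Nonempty := ⟨0, Φj.zero_mem⟩
  have hImg : ∀ ν, ((Φj.map (T ν) : Submodule ℝ _) : Set (EuclideanSpace ℝ (Fin N))).Nonempty :=
    fun ν => ⟨0, (Φj.map (T ν)).zero_mem⟩
  -- key estimate 1 : Λm · dist(φν, Φj) ≤ dist(bν, Λν Φj)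
  have key1 : ∀ ν ∈ 𝒩, Λm * infDist (φ ν) (Φj : Set (EuclideanSpace ℝ (Fin N))) ≤
      infDist (b ν) ((Φj.map (T ν) : Submodule ℝ _) : Set (EuclideanSpace ℝ (Fin N))) := by
    intro ν hν
    refine le_infDist_aux (hImg ν) ?_
    intro y hy
    rcases Submodule.mem_map.1 hy with ⟨ψ, hψ, rfl⟩
    have h1 : dist (b ν) (T ν ψ) = ‖T ν (φ ν - ψ)‖ := by
      rw [dist_eq_norm, ← hφ ν hν, ← map_sub]
    calc Λm * infDist (φ ν) (Φj : Set (EuclideanSpace ℝ (Fin N)))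
        ≤ Λm * dist (φ ν) ψ :=
          mul_le_mul_of_nonneg_left (infDist_le_dist_of_mem hψ) hΛm.le
      _ = Λm * ‖φ ν - ψ‖ := by rw [dist_eq_norm]
      _ ≤ ‖T ν (φ ν - ψ)‖ := hlowN ν hν _
      _ = dist (b ν) (T ν ψ) := h1.symm
  -- key estimate 2 : dist(bν, Λν Φj) ≤ Λp · dist(φν, Φj)
  have key2 : ∀ ν ∈ 𝒩,
      infDist (b ν) ((Φj.map (T ν) : Submodule ℝ _) : Set (EuclideanSpace ℝ (Fin N))) ≤
        Λp * infDist (φ ν) (Φj : Set (EuclideanSpace ℝ (Fin N))) := by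
    intro ν hν
    have hdiv : infDist (b ν) ((Φj.map (T ν) : Submodule ℝ _) :
        Set (EuclideanSpace ℝ (Fin N))) / Λp ≤
        infDist (φ ν) (Φj : Set (EuclideanSpace ℝ (Fin N))) := by
      refine le_infDist_aux h0Φ ?_
      intro ψ hψ
      rw [div_le_iff₀ hΛp]
      calc infDist (b ν) ((Φj.map (T ν) : Submodule ℝ _) : Set (EuclideanSpace ℝ (Fin N)))
          ≤ dist (b ν) (T ν ψ) :=
            infDist_le_dist_of_mem (Submodule.mem_map_of_mem hψ)
        _ = ‖T ν (φ ν - ψ)‖ := by rw [dist_eq_norm, ← hφ ν hν, ← map_sub]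
        _ ≤ Λp * ‖φ ν - ψ‖ := huppN ν hν _
        _ = dist (φ ν) ψ * Λp := by rw [dist_eq_norm]; ring
    calc infDist (b ν) ((Φj.map (T ν) : Submodule ℝ _) : Set (EuclideanSpace ℝ (Fin N)))
        = infDist (b ν) ((Φj.map (T ν) : Submodule ℝ _) :
            Set (EuclideanSpace ℝ (Fin N))) / Λp * Λp := by field_simp
      _ ≤ infDist (φ ν) (Φj : Set (EuclideanSpace ℝ (Fin N))) * Λp :=
          mul_le_mul_of_nonneg_right hdiv hΛp.le
      _ = Λp * infDist (φ ν) (Φj : Set (EuclideanSpace ℝ (Fin N))) := mul_comm _ _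
  set D := infDist (φ νj) (Φj : Set (EuclideanSpace ℝ (Fin N))) with hD
  set S := infDist (b νj)
    ((Φj.map (T νj) : Submodule ℝ _) : Set (EuclideanSpace ℝ (Fin N))) with hS
  have hνj𝒩 : νj ∈ 𝒩 := hNnet hνj
  have hSD : S ≤ Λp * D := key2 νj hνj𝒩
  -- the uniform bound on the sup
  have hchain : ∀ ν ∈ 𝒩, infDist (φ ν) (Φj : Set (EuclideanSpace ℝ (Fin N))) ≤
      (2 * Λp / Λm) * D := by
    intro ν hν
    obtain ⟨μ, hμnet, hμd⟩ := hnet ν hν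
    have hμ𝒩 : μ ∈ 𝒩 := hNnet hμnet
    have hA : Λm * infDist (φ μ) (Φj : Set (EuclideanSpace ℝ (Fin N))) ≤ S :=
      (key1 μ hμ𝒩).trans (hmax μ hμnet)
    have htri : infDist (φ ν) (Φj : Set (EuclideanSpace ℝ (Fin N))) ≤
        infDist (φ μ) (Φj : Set (EuclideanSpace ℝ (Fin N))) + dist (φ ν) (φ μ) :=
      infDist_le_infDist_add_dist
    have hdist : dist (φ ν) (φ μ) ≤ ε / (2 * Λm) := by
      have h1 : dist (φ ν) (φ μ) ≤ Cφ * ‖ν - μ‖ := by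
        rw [dist_eq_norm]; exact hLip ν hν μ hμ𝒩
      have h2 : Cφ * ‖ν - μ‖ ≤ Cφ * δ :=
        mul_le_mul_of_nonneg_left hμd.le hCφ.le
      have h3 : Cφ * δ ≤ ε / (2 * Λm) := by
        have := mul_le_mul_of_nonneg_left hδ hCφ.le
        calc Cφ * δ ≤ Cφ * (ε / (2 * Cφ * Λm)) := this
          _ = ε / (2 * Λm) := by field_simp
      linarith
    have hdist2 : Λm * dist (φ ν) (φ μ) ≤ S := by
      have h4 : Λm * (ε / (2 * Λm)) = ε / 2 := by field_simp
      have h5 : Λm * dist (φ ν) (φ μ) ≤ Λm * (ε / (2 * Λm)) :=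
        mul_le_mul_of_nonneg_left hdist hΛm.le
      linarith
    have h6 : Λm * infDist (φ ν) (Φj : Set (EuclideanSpace ℝ (Fin N))) ≤ 2 * Λp * D := by
      have h7 : Λm * infDist (φ ν) (Φj : Set (EuclideanSpace ℝ (Fin N))) ≤
          Λm * infDist (φ μ) (Φj : Set (EuclideanSpace ℝ (Fin N))) +
            Λm * dist (φ ν) (φ μ) := by nlinarith
      linarith
    rw [div_mul_eq_mul_div, le_div_iff₀ hΛm]
    linarith
  -- conclude
  have hsup : (⨆ ν : 𝒩, infDist (φ (ν : EuclideanSpace ℝ (Fin d)))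
      (Φj : Set (EuclideanSpace ℝ (Fin N)))) ≤ (2 * Λp / Λm) * D := by
    refine Real.iSup_le (fun ν => hchain ν ν.2) ?_
    have : (0:ℝ) ≤ D := infDist_nonneg
    positivity
  calc (Λm / (2 * Λp)) * (⨆ ν : 𝒩, infDist (φ (ν : EuclideanSpace ℝ (Fin d)))
        (Φj : Set (EuclideanSpace ℝ (Fin N))))
      ≤ (Λm / (2 * Λp)) * ((2 * Λp / Λm) * D) :=
        mul_le_mul_of_nonneg_left hsup (by positivity)
    _ = D := by field_simp
end

section
/- (Stopping criterion guarantees the approximation error.) Let Φ ⊂ ℝ^N be a linear subspace such that the stopping criterion max_{ν̃ ∈ 𝒩̃} dist(b_ν̃, Λ_ν̃ Φ) < ε/2 holds. Then the whole family of minimizers is approximated: sup_{ν ∈ 𝒩} dist(φ⁰_ν, Φ) < ε / Λ₋. -/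
open Metric

/-- **Stopping criterion guarantees the approximation error.** If the surrogate distances
satisfy `dist(b_ν̃, Λ_ν̃ Φ) < ε/2` for every `ν̃` in the `δ`-net `𝒩̃`, then the whole family
of minimisers is approximated: `sup_{ν ∈ 𝒩} dist(φ⁰_ν, Φ) < ε/Λ₋`. -/
theorem greedy_stopping_criterion
    {d N : ℕ}
    (𝒩 : Set (EuclideanSpace ℝ (Fin d))) (h𝒩 : IsCompact 𝒩)
    (Λm Λp : ℝ) (hΛm : 0 < Λm) (hmp : Λm ≤ Λp)
    (Λ : EuclideanSpace ℝ (Fin d) → Matrix (Fin N) (Fin N) ℝ)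
    (hsym : ∀ ν ∈ 𝒩, (Λ ν).IsSymm)
    (hlow : ∀ ν ∈ 𝒩, ∀ ψ : EuclideanSpace ℝ (Fin N),
      Λm * ‖ψ‖ ^ 2 ≤ (inner ℝ (Matrix.toEuclideanLin (Λ ν) ψ) ψ : ℝ))
    (hupp : ∀ ν ∈ 𝒩, ∀ ψ : EuclideanSpace ℝ (Fin N),
      (inner ℝ (Matrix.toEuclideanLin (Λ ν) ψ) ψ : ℝ) ≤ Λp * ‖ψ‖ ^ 2)
    (b φ : EuclideanSpace ℝ (Fin d) → EuclideanSpace ℝ (Fin N))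
    (hφ : ∀ ν ∈ 𝒩, Matrix.toEuclideanLin (Λ ν) (φ ν) = b ν)
    (Cφ : ℝ) (hCφ : 0 < Cφ)
    (hLip : ∀ ν ∈ 𝒩, ∀ μ ∈ 𝒩, ‖φ ν - φ μ‖ ≤ Cφ * ‖ν - μ‖)
    (ε δ : ℝ) (hε : 0 < ε) (hδ0 : 0 < δ) (hδ : δ ≤ ε / (2 * Cφ * Λm))
    (Nnet : Finset (EuclideanSpace ℝ (Fin d))) (hNnet : ↑Nnet ⊆ 𝒩)
    (hnet : ∀ ν ∈ 𝒩, ∃ μ ∈ Nnet, ‖ν - μ‖ < δ)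
    (Φ : Submodule ℝ (EuclideanSpace ℝ (Fin N)))
    (hstop : ∀ μ ∈ Nnet,
      infDist (b μ) (Φ.map (Matrix.toEuclideanLin (Λ μ)) : Set (EuclideanSpace ℝ (Fin N))) <
        ε / 2) :
    (⨆ ν : 𝒩, infDist (φ (ν : EuclideanSpace ℝ (Fin d)))
        (Φ : Set (EuclideanSpace ℝ (Fin N)))) < ε / Λm := by
  -- Key estimate on the net points
  have key : ∀ μ ∈ Nnet, infDist (φ μ) (Φ : Set (EuclideanSpace ℝ (Fin N))) < ε / (2 * Λm) := by
    intro μ hμ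
    have hμ𝒩 : μ ∈ 𝒩 := hNnet hμ
    have hS : ((Φ.map (Matrix.toEuclideanLin (Λ μ))) : Set (EuclideanSpace ℝ (Fin N))).Nonempty :=
      ⟨0, Submodule.zero_mem _⟩
    obtain ⟨y, hyS, hy⟩ := (infDist_lt_iff hS).mp (hstop μ hμ)
    obtain ⟨ψ, hψΦ, rfl⟩ := hyS
    have hb : Matrix.toEuclideanLin (Λ μ) (φ μ - ψ)
        = b μ - Matrix.toEuclideanLin (Λ μ) ψ := by
      rw [map_sub, hφ μ hμ𝒩]
    have h1 : Λm * ‖φ μ - ψ‖ ^ 2 ≤ ‖b μ - Matrix.toEuclideanLin (Λ μ) ψ‖ * ‖φ μ - ψ‖ := by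
      calc Λm * ‖φ μ - ψ‖ ^ 2
          ≤ (inner ℝ (Matrix.toEuclideanLin (Λ μ) (φ μ - ψ)) (φ μ - ψ) : ℝ) := hlow μ hμ𝒩 _
        _ ≤ ‖Matrix.toEuclideanLin (Λ μ) (φ μ - ψ)‖ * ‖φ μ - ψ‖ := real_inner_le_norm _ _
        _ = ‖b μ - Matrix.toEuclideanLin (Λ μ) ψ‖ * ‖φ μ - ψ‖ := by rw [hb]
    have h2 : Λm * ‖φ μ - ψ‖ ≤ ‖b μ - Matrix.toEuclideanLin (Λ μ) ψ‖ := by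
      rcases eq_or_ne (φ μ) ψ with h | h
      · simp [h]
      · have hn : (0:ℝ) < ‖φ μ - ψ‖ := norm_pos_iff.mpr (sub_ne_zero.mpr h)
        nlinarith [h1]
    have hyn : ‖b μ - Matrix.toEuclideanLin (Λ μ) ψ‖ < ε / 2 := by
      rwa [dist_eq_norm] at hy
    have hdy : dist (φ μ) ψ < ε / (2 * Λm) := by
      rw [dist_eq_norm, lt_div_iff₀ (by positivity)]
      nlinarith
    exact lt_of_le_of_lt (infDist_le_dist_of_mem hψΦ) hdy
  have hCδ : Cφ * δ ≤ ε / (2 * Λm) := by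
    rw [le_div_iff₀ (by positivity)] at hδ
    rw [le_div_iff₀ (by positivity)]
    nlinarith
  rcases Nnet.eq_empty_or_nonempty with hne | hne
  · -- then 𝒩 is empty and the sup is 0
    have hempty : IsEmpty (𝒩 : Set (EuclideanSpace ℝ (Fin d))) := by
      constructor
      rintro ⟨ν, hν⟩
      obtain ⟨μ, hμ, -⟩ := hnet ν hν
      simp [hne] at hμ
    rw [iSup_of_empty']
    have : (0:ℝ) < ε / Λm := by positivity
    simpa [Real.sSup_empty] using this
  · set c := Nnet.sup' hne (fun μ => infDist (φ μ) (Φ : Set (EuclideanSpace ℝ (Fin N)))) with hc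
    have hc0 : 0 ≤ c := by
      obtain ⟨μ, hμ⟩ := hne
      exact le_trans infDist_nonneg (Finset.le_sup' (fun μ => infDist (φ μ) (Φ : Set (EuclideanSpace ℝ (Fin N)))) hμ)
    have hclt : c < ε / (2 * Λm) := by
      rw [hc, Finset.sup'_lt_iff]
      exact key
    have hbound : (⨆ ν : 𝒩, infDist (φ (ν : EuclideanSpace ℝ (Fin d)))
        (Φ : Set (EuclideanSpace ℝ (Fin N)))) ≤ c + Cφ * δ := by
      apply Real.iSup_le _ (by positivity)
      rintro ⟨ν, hν⟩
      obtain ⟨μ, hμ, hd⟩ := hnet ν hν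
      have h1 : infDist (φ ν) (Φ : Set (EuclideanSpace ℝ (Fin N)))
          ≤ infDist (φ μ) (Φ : Set (EuclideanSpace ℝ (Fin N))) + dist (φ ν) (φ μ) :=
        infDist_le_infDist_add_dist
      have h2 : dist (φ ν) (φ μ) ≤ Cφ * δ := by
        rw [dist_eq_norm]
        calc ‖φ ν - φ μ‖ ≤ Cφ * ‖ν - μ‖ := hLip ν hν μ (hNnet hμ)
          _ ≤ Cφ * δ := by nlinarith
      have h3 : infDist (φ μ) (Φ : Set (EuclideanSpace ℝ (Fin N))) ≤ c :=
        Finset.le_sup' (fun μ => infDist (φ μ) (Φ : Set (EuclideanSpace ℝ (Fin N)))) hμ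
      linarith
    have : c + Cφ * δ < ε / Λm := by
      have : ε / (2 * Λm) + ε / (2 * Λm) = ε / Λm := by field_simp; ring
      linarith
    linarith
end

section
/- (Performance estimate for the online approximate control.) Let Λ and Λ̃ be symmetric positive-definite N×N real matrices, b, b̃ ∈ ℝ^N, φ⁰ = Λ⁻¹ b, φ̃⁰ = Λ̃⁻¹ b̃, let Φ ⊂ ℝ^N be a linear subspace, and let φ* ∈ Φ be such that Λ φ* is the orthogonal projection of b onto the subspace Λ Φ. Then for every ψ ∈ Φ one has |b − Λ φ*| ≤ |b − b̃| + |Λ̃ (φ̃⁰ − ψ)| + ‖Λ̃ − Λ‖ · |ψ|. In particular, if |b − b̃| ≤ C_L δ, ‖Λ − Λ̃‖ ≤ C_Λ δ, and there exists ψ ∈ Φ with |Λ̃(φ̃⁰ − ψ)| ≤ ε/2 and |ψ| ≤ M, then |b − Λ φ*| ≤ ε/2 + (C_L + M C_Λ) δ. -/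
open Metric

/-- **Performance estimate for the online approximate control.** If `Λφ*` is the orthogonal
projection (nearest point) of `b` onto `ΛΦ`, `Λφ⁰ = b` and `Λ̃φ̃⁰ = b̃`, then for every
`ψ ∈ Φ`: `|b − Λφ*| ≤ |b − b̃| + |Λ̃(φ̃⁰ − ψ)| + ‖Λ̃ − Λ‖·|ψ|`; in particular, if
`|b − b̃| ≤ C_L δ`, `‖Λ − Λ̃‖ ≤ C_Λ δ` and some `ψ ∈ Φ` satisfies `|Λ̃(φ̃⁰ − ψ)| ≤ ε/2`,
`|ψ| ≤ M`, then `|b − Λφ*| ≤ ε/2 + (C_L + M C_Λ) δ`. -/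
theorem online_control_performance
    {N : ℕ}
    (Λ Λt : Matrix (Fin N) (Fin N) ℝ) (hΛ : Λ.PosDef) (hΛt : Λt.PosDef)
    (b bt φ0 φt0 : EuclideanSpace ℝ (Fin N))
    (hφ0 : Matrix.toEuclideanCLM (𝕜 := ℝ) Λ φ0 = b)
    (hφt0 : Matrix.toEuclideanCLM (𝕜 := ℝ) Λt φt0 = bt)
    (Φ : Submodule ℝ (EuclideanSpace ℝ (Fin N)))
    (φs : EuclideanSpace ℝ (Fin N)) (hφsΦ : φs ∈ Φ)
    (hproj : ∀ ψ ∈ Φ, ‖b - Matrix.toEuclideanCLM (𝕜 := ℝ) Λ φs‖ ≤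
      ‖b - Matrix.toEuclideanCLM (𝕜 := ℝ) Λ ψ‖) :
    (∀ ψ ∈ Φ, ‖b - Matrix.toEuclideanCLM (𝕜 := ℝ) Λ φs‖ ≤
      ‖b - bt‖ + ‖Matrix.toEuclideanCLM (𝕜 := ℝ) Λt (φt0 - ψ)‖ +
        ‖(Matrix.toEuclideanCLM (𝕜 := ℝ) Λt : EuclideanSpace ℝ (Fin N) →L[ℝ]
            EuclideanSpace ℝ (Fin N)) -
          (Matrix.toEuclideanCLM (𝕜 := ℝ) Λ)‖ * ‖ψ‖) ∧
    (∀ δ CL CΛ Mb ε : ℝ,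
      ‖b - bt‖ ≤ CL * δ →
      ‖(Matrix.toEuclideanCLM (𝕜 := ℝ) Λ : EuclideanSpace ℝ (Fin N) →L[ℝ]
          EuclideanSpace ℝ (Fin N)) - (Matrix.toEuclideanCLM (𝕜 := ℝ) Λt)‖ ≤ CΛ * δ →
      (∃ ψ ∈ Φ, ‖Matrix.toEuclideanCLM (𝕜 := ℝ) Λt (φt0 - ψ)‖ ≤ ε / 2 ∧ ‖ψ‖ ≤ Mb) →
      ‖b - Matrix.toEuclideanCLM (𝕜 := ℝ) Λ φs‖ ≤ ε / 2 + (CL + Mb * CΛ) * δ) := by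

  set T := (Matrix.toEuclideanCLM (𝕜 := ℝ) Λ : EuclideanSpace ℝ (Fin N) →L[ℝ]
      EuclideanSpace ℝ (Fin N)) with hT
  set Tt := (Matrix.toEuclideanCLM (𝕜 := ℝ) Λt : EuclideanSpace ℝ (Fin N) →L[ℝ]
      EuclideanSpace ℝ (Fin N)) with hTt
  have main : ∀ ψ ∈ Φ, ‖b - T φs‖ ≤
      ‖b - bt‖ + ‖Tt (φt0 - ψ)‖ + ‖Tt - T‖ * ‖ψ‖ := by
    intro ψ hψ
    have h1 := hproj ψ hψ
    have hdecomp : b - T ψ = (b - bt) + Tt (φt0 - ψ) + (Tt - T) ψ := by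
      simp only [map_sub, ContinuousLinearMap.sub_apply, hφt0]
      abel
    calc ‖b - T φs‖ ≤ ‖b - T ψ‖ := h1
      _ = ‖(b - bt) + Tt (φt0 - ψ) + (Tt - T) ψ‖ := by rw [hdecomp]
      _ ≤ ‖(b - bt) + Tt (φt0 - ψ)‖ + ‖(Tt - T) ψ‖ := norm_add_le _ _
      _ ≤ ‖b - bt‖ + ‖Tt (φt0 - ψ)‖ + ‖(Tt - T) ψ‖ := by
          gcongr; exact norm_add_le _ _
      _ ≤ ‖b - bt‖ + ‖Tt (φt0 - ψ)‖ + ‖Tt - T‖ * ‖ψ‖ := by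
          gcongr; exact (Tt - T).le_opNorm ψ
  refine ⟨main, ?_⟩
  intro δ CL CΛ Mb ε hb hΛd ⟨ψ, hψΦ, hψ1, hψ2⟩
  have h := main ψ hψΦ
  have hrev : ‖Tt - T‖ = ‖T - Tt‖ := norm_sub_rev _ _
  have h2 : ‖Tt - T‖ * ‖ψ‖ ≤ (CΛ * δ) * Mb := by
    rw [hrev]
    exact mul_le_mul hΛd hψ2 (norm_nonneg _) (le_trans (norm_nonneg _) (hrev ▸ hΛd))
  calc ‖b - T φs‖ ≤ ‖b - bt‖ + ‖Tt (φt0 - ψ)‖ + ‖Tt - T‖ * ‖ψ‖ := h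
    _ ≤ CL * δ + ε / 2 + (CΛ * δ) * Mb := by gcongr
    _ = ε / 2 + (CL + Mb * CΛ) * δ := by ring
end
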